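/- arXiv:math/0702894 — 3 statements merged into one kernel-verified Lean document; each statement's English description precedes it below -/
import Mathlib

section
/- Let p be prime and Γ a finite p-group. Any homomorphism f: M → N of projective ℤ/p[Γ]-modules such that the induced map f ⊗ id : M ⊗_{ℤ/p[Γ]} ℤ/p → N ⊗_{ℤ/p[Γ]} ℤ/p is injective is itself injective. -/
/-- The augmentation homomorphism `ℤ/p[Γ] → ℤ/p`. -/
noncomputable def aug (p : ℕ) (Γ : Type*) [Group Γ] :
    MonoidAlgebra (ZMod p) Γ →ₐ[ZMod p] ZMod p :=
  MonoidAlgebra.lift (ZMod p) (ZMod p) Γ 1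

/-- The augmentation ideal of `ℤ/p[Γ]`. -/
noncomputable def augIdeal (p : ℕ) (Γ : Type*) [Group Γ] :
    Ideal (MonoidAlgebra (ZMod p) Γ) :=
  RingHom.ker (aug p Γ)

lemma aug_of (p : ℕ) (Γ : Type*) [Group Γ] (g : Γ) :
    aug p Γ (MonoidAlgebra.of (ZMod p) Γ g) = 1 := by
  simp [aug]

/-- Nakayama via counting: a finite module over `ℤ/p[Γ]` on which the augmentation ideal
acts surjectively is trivial. -/
lemma nak (p : ℕ) (hp : p.Prime) (Γ : Type*) [Group Γ] [Finite Γ] (hΓ : IsPGroup p Γ)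
    (V : Type*) [AddCommGroup V] [Module (MonoidAlgebra (ZMod p) Γ) V]
    [Module (ZMod p) V] [IsScalarTower (ZMod p) (MonoidAlgebra (ZMod p) Γ) V] [Finite V]
    (h : augIdeal p Γ • (⊤ : Submodule (MonoidAlgebra (ZMod p) Γ) V) = ⊤) :
    Subsingleton V := by
  haveI : Fact p.Prime := ⟨hp⟩
  haveI : NeZero p := ⟨hp.ne_zero⟩
  by_contra hns
  rw [not_subsingleton_iff_nontrivial] at hns
  have smul_comm' : ∀ (a : MonoidAlgebra (ZMod p) Γ) (c : ZMod p) (v : V),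
      a • (c • v) = c • (a • v) := by
    intro a c v
    rw [← algebraMap_smul (MonoidAlgebra (ZMod p) Γ) c v, ← mul_smul, ← Algebra.commutes,
      mul_smul, algebraMap_smul]
  letI : MulAction Γ (Module.Dual (ZMod p) V) :=
    { smul := fun g φ =>
        { toFun := fun v => φ (MonoidAlgebra.of (ZMod p) Γ g⁻¹ • v)
          map_add' := fun a b => by rw [smul_add, map_add]
          map_smul' := fun c v => by simp only [RingHom.id_apply]; rw [smul_comm', map_smul] }
      one_smul := fun φ => by
        ext v
        show φ (MonoidAlgebra.of (ZMod p) Γ (1 : Γ)⁻¹ • v) = φ v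
        rw [inv_one, map_one, one_smul]
      mul_smul := fun g h φ => by
        ext v
        show φ (MonoidAlgebra.of (ZMod p) Γ (g * h)⁻¹ • v)
          = φ (MonoidAlgebra.of (ZMod p) Γ h⁻¹ • (MonoidAlgebra.of (ZMod p) Γ g⁻¹ • v))
        rw [mul_inv_rev, map_mul, mul_smul] }
  haveI : Finite (Module.Dual (ZMod p) V) :=
    Finite.of_injective (fun φ => (φ : V → ZMod p)) DFunLike.coe_injective
  obtain ⟨v₀, hv₀⟩ := exists_ne (0 : V)
  have hDn : ∃ φ : Module.Dual (ZMod p) V, φ ≠ 0 := by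
    by_contra hc
    push_neg at hc
    exact hv₀ ((Module.forall_dual_apply_eq_zero_iff (ZMod p) v₀).mp fun φ => by
      rw [hc φ]; rfl)
  obtain ⟨φ₀, hφ₀⟩ := hDn
  have hord : addOrderOf φ₀ = p := by
    have hsmul : p • φ₀ = 0 := by
      rw [← Nat.cast_smul_eq_nsmul (ZMod p), ZMod.natCast_self, zero_smul]
    have h1 : addOrderOf φ₀ ∣ p := addOrderOf_dvd_of_nsmul_eq_zero hsmul
    rcases (Nat.dvd_prime hp).mp h1 with h | h
    · exact absurd (AddMonoid.addOrderOf_eq_one_iff.mp h) hφ₀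
    · exact h
  have hdvd : p ∣ Nat.card (Module.Dual (ZMod p) V) := by
    have := addOrderOf_dvd_natCard φ₀
    rwa [hord] at this
  have h0fix : (0 : Module.Dual (ZMod p) V) ∈ MulAction.fixedPoints Γ _ := by
    intro g
    ext v
    rfl
  obtain ⟨φ, hφfix, hφne⟩ := hΓ.exists_fixed_point_of_prime_dvd_card_of_fixed_point (Module.Dual (ZMod p) V) hdvd h0fix
  have hfix' : ∀ (g : Γ) (v : V), φ (MonoidAlgebra.of (ZMod p) Γ g • v) = φ v := by
    intro g v
    have h1 : φ (MonoidAlgebra.of (ZMod p) Γ g⁻¹⁻¹ • v) = φ v :=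
      DFunLike.congr_fun (hφfix g⁻¹) v
    rwa [inv_inv] at h1
  have key : ∀ (r : MonoidAlgebra (ZMod p) Γ) (v : V), φ (r • v) = aug p Γ r • φ v := fun r =>
    MonoidAlgebra.induction_on
      (motive := fun r => ∀ v : V, φ (r • v) = aug p Γ r • φ v) r
      (fun g v => by rw [hfix', aug_of, one_smul])
      (fun a b ha hb v => by rw [add_smul, map_add, ha, hb, map_add, add_smul])
      (fun c a ha v => by rw [smul_assoc, map_smul, ha, map_smul, smul_assoc])
  have hzero : φ = 0 := by
    ext v
    have hv : v ∈ augIdeal p Γ • (⊤ : Submodule (MonoidAlgebra (ZMod p) Γ) V) :=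
      by rw [h]; exact Submodule.mem_top
    show φ v = 0
    refine Submodule.smul_induction_on hv (fun r hr n _ => ?_)
      (fun a b ha hb => by rw [map_add, ha, hb, add_zero])
    have : aug p Γ r = 0 := by
      simpa [augIdeal, RingHom.mem_ker] using hr
    rw [key r n, this, zero_smul]
  exact absurd hzero.symm hφne

/-- The augmentation ideal of `ℤ/p[Γ]` is nilpotent, phrased via iterated smul. -/
lemma aug_nilpotent (p : ℕ) (hp : p.Prime) (Γ : Type*) [Group Γ] [Finite Γ]
    (hΓ : IsPGroup p Γ) :
    ∃ m, (fun J : Ideal (MonoidAlgebra (ZMod p) Γ) => augIdeal p Γ • J)^[m] ⊤ = ⊥ := by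
  haveI : Fact p.Prime := ⟨hp⟩
  haveI : NeZero p := ⟨hp.ne_zero⟩
  haveI : Finite (MonoidAlgebra (ZMod p) Γ) := by
    exact Finite.of_injective (fun f => (MonoidAlgebra.coeffEquiv f : Γ → ZMod p))
      (DFunLike.coe_injective.comp MonoidAlgebra.coeffEquiv.injective)
  haveI : Finite (Ideal (MonoidAlgebra (ZMod p) Γ)) :=
    Finite.of_injective (fun J : Ideal (MonoidAlgebra (ZMod p) Γ) => (J : Set (MonoidAlgebra (ZMod p) Γ)))
      SetLike.coe_injective
  set FA : ℕ → Ideal (MonoidAlgebra (ZMod p) Γ) :=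
    fun k => (fun J : Ideal (MonoidAlgebra (ZMod p) Γ) => augIdeal p Γ • J)^[k] ⊤ with hFA
  have hsucc : ∀ k, FA (k + 1) = augIdeal p Γ • FA k := fun k =>
    Function.iterate_succ_apply' _ k ⊤
  have hanti : Antitone FA := antitone_nat_of_succ_le fun k => by
    rw [hsucc]; exact Submodule.smul_le_right
  obtain ⟨a, b, hab, heq⟩ := Finite.exists_ne_map_eq_of_infinite FA
  have hstab : ∃ m, augIdeal p Γ • FA m = FA m := by
    have key : ∀ {c d : ℕ}, c < d → FA c = FA d → augIdeal p Γ • FA c = FA c := by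
      intro c d h he
      have h1 : FA (c + 1) ≤ FA c := hanti (Nat.le_succ c)
      have h2 : FA c ≤ FA (c + 1) := by
        rw [he]; exact hanti h
      rw [← hsucc c]
      exact le_antisymm h1 h2
    rcases hab.lt_or_gt with h | h
    · exact ⟨a, key h heq⟩
    · exact ⟨b, key h heq.symm⟩
  obtain ⟨m, hm⟩ := hstab
  refine ⟨m, ?_⟩
  have htop : augIdeal p Γ • (⊤ : Submodule (MonoidAlgebra (ZMod p) Γ) (FA m)) = ⊤ := by
    apply Submodule.map_injective_of_injective (FA m).injective_subtype
    rw [Submodule.map_smul'', Submodule.map_subtype_top]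
    exact hm
  haveI := nak p hp Γ hΓ (FA m) htop
  rw [eq_bot_iff]
  intro x hx
  have hx0 : (⟨x, hx⟩ : FA m) = (0 : FA m) := Subsingleton.elim _ _
  simpa using congrArg Subtype.val hx0

/-- The submodule `I·M` of a `ℤ/p[Γ]`-module `M`, where `I` is the augmentation ideal;
the quotient `M ⧸ I·M` is `M ⊗_{ℤ/p[Γ]} ℤ/p`, the coinvariants of `M`. -/
noncomputable def coinvSub (p : ℕ) (Γ : Type*) [Group Γ] (M : Type*) [AddCommGroup M]
    [Module (MonoidAlgebra (ZMod p) Γ) M] : Submodule (MonoidAlgebra (ZMod p) Γ) M :=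
  augIdeal p Γ • (⊤ : Submodule (MonoidAlgebra (ZMod p) Γ) M)

/-- The map `M ⊗_{ℤ/p[Γ]} ℤ/p → N ⊗_{ℤ/p[Γ]} ℤ/p` induced by `f : M → N`. -/
noncomputable def coinvMap (p : ℕ) (Γ : Type*) [Group Γ] {M N : Type*} [AddCommGroup M]
    [Module (MonoidAlgebra (ZMod p) Γ) M] [AddCommGroup N]
    [Module (MonoidAlgebra (ZMod p) Γ) N] (f : M →ₗ[MonoidAlgebra (ZMod p) Γ] N) :
    (M ⧸ coinvSub p Γ M) →ₗ[MonoidAlgebra (ZMod p) Γ] (N ⧸ coinvSub p Γ N) :=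
  Submodule.mapQ _ _ f (by
    rw [← Submodule.map_le_iff_le_comap, coinvSub, coinvSub, Submodule.map_smul'']
    exact Submodule.smul_mono le_rfl le_top)

/-- On the coinvariants quotient, any scalar acts through its augmentation. -/
lemma smul_quot (p : ℕ) (Γ : Type*) [Group Γ] (P : Type*) [AddCommGroup P]
    [Module (MonoidAlgebra (ZMod p) Γ) P] (r : MonoidAlgebra (ZMod p) Γ)
    (w : P ⧸ coinvSub p Γ P) :
    r • w = algebraMap (ZMod p) (MonoidAlgebra (ZMod p) Γ) (aug p Γ r) • w := by
  obtain ⟨x, rfl⟩ := Submodule.Quotient.mk_surjective _ w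
  rw [← Submodule.Quotient.mk_smul, ← Submodule.Quotient.mk_smul, ← sub_eq_zero,
    ← Submodule.Quotient.mk_sub, ← sub_smul, Submodule.Quotient.mk_eq_zero]
  refine Submodule.smul_mem_smul ?_ Submodule.mem_top
  simp [augIdeal, RingHom.mem_ker, map_sub, aug, MonoidAlgebra.lift_single]

/-- Strebel's lemma: for a finite p-group `Γ`, a homomorphism of
projective `ℤ/p[Γ]`-modules whose image under `− ⊗_{ℤ/p[Γ]} ℤ/p` is injective is
itself injective. -/
theorem strebel (p : ℕ) (hp : p.Prime) (Γ : Type*) [Group Γ] [Finite Γ]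
    (hΓ : IsPGroup p Γ) {M N : Type*} [AddCommGroup M]
    [Module (MonoidAlgebra (ZMod p) Γ) M] [AddCommGroup N]
    [Module (MonoidAlgebra (ZMod p) Γ) N]
    [Module.Projective (MonoidAlgebra (ZMod p) Γ) M]
    [Module.Projective (MonoidAlgebra (ZMod p) Γ) N]
    (f : M →ₗ[MonoidAlgebra (ZMod p) Γ] N)
    (hinj : Function.Injective (coinvMap p Γ f)) :
    Function.Injective f := by
  haveI : Fact p.Prime := ⟨hp⟩
  letI instV : Module (ZMod p) (M ⧸ coinvSub p Γ M) :=
    Module.compHom _ (algebraMap (ZMod p) (MonoidAlgebra (ZMod p) Γ))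
  letI instW : Module (ZMod p) (N ⧸ coinvSub p Γ N) :=
    Module.compHom _ (algebraMap (ZMod p) (MonoidAlgebra (ZMod p) Γ))
  have hsmulV : ∀ (c : ZMod p) (v : M ⧸ coinvSub p Γ M),
      c • v = algebraMap (ZMod p) (MonoidAlgebra (ZMod p) Γ) c • v := fun c v => rfl
  have hsmulW : ∀ (c : ZMod p) (w : N ⧸ coinvSub p Γ N),
      c • w = algebraMap (ZMod p) (MonoidAlgebra (ZMod p) Γ) c • w := fun c w => rfl
  -- the coinvariant map as a `ZMod p`-linear map
  let f' : (M ⧸ coinvSub p Γ M) →ₗ[ZMod p] (N ⧸ coinvSub p Γ N) :=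
    { toFun := coinvMap p Γ f
      map_add' := map_add _
      map_smul' := fun c v => by
        simp only [RingHom.id_apply]
        rw [hsmulV, hsmulW, map_smul] }
  have hker : LinearMap.ker f' = ⊥ := LinearMap.ker_eq_bot.mpr hinj
  obtain ⟨g, hg⟩ := LinearMap.exists_leftInverse_of_injective f' hker
  -- upgrade the splitting to a `ℤ/p[Γ]`-linear map
  let G : (N ⧸ coinvSub p Γ N) →ₗ[MonoidAlgebra (ZMod p) Γ] (M ⧸ coinvSub p Γ M) :=
    { toFun := g
      map_add' := map_add g
      map_smul' := fun r w => by
        simp only [RingHom.id_apply]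
        rw [smul_quot p Γ N r w, ← hsmulW, map_smul, hsmulV, ← smul_quot p Γ M r (g w)] }
  -- lift along the projection `M → M ⧸ IM` using projectivity of `N`
  obtain ⟨h, hh⟩ := Module.projective_lifting_property (coinvSub p Γ M).mkQ
      (G.comp (coinvSub p Γ N).mkQ) (Submodule.mkQ_surjective _)
  set t : M →ₗ[MonoidAlgebra (ZMod p) Γ] M := h.comp f - LinearMap.id with htdef
  have ht : ∀ x : M, t x ∈ coinvSub p Γ M := by
    intro x
    have h2 : (coinvSub p Γ M).mkQ (h (f x)) = (coinvSub p Γ M).mkQ x := by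
      have e1 : (coinvSub p Γ M).mkQ (h (f x)) = G ((coinvSub p Γ N).mkQ (f x)) :=
        LinearMap.congr_fun hh (f x)
      have e2 : (coinvSub p Γ N).mkQ (f x) = coinvMap p Γ f ((coinvSub p Γ M).mkQ x) := by
        rw [coinvMap]
        simp [Submodule.mapQ_apply]
      have e3 : G (coinvMap p Γ f ((coinvSub p Γ M).mkQ x)) = (coinvSub p Γ M).mkQ x :=
        LinearMap.congr_fun hg ((coinvSub p Γ M).mkQ x)
      rw [e1, e2, e3]
    have : (coinvSub p Γ M).mkQ (t x) = 0 := by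
      rw [htdef]
      simp only [LinearMap.sub_apply, LinearMap.comp_apply, LinearMap.id_apply, map_sub]
      rw [h2, sub_self]
    rwa [← Submodule.Quotient.mk_eq_zero]
  -- nilpotency of the augmentation ideal finishes the proof
  obtain ⟨m, hm⟩ := aug_nilpotent p hp Γ hΓ
  rw [← LinearMap.ker_eq_bot]
  rw [eq_bot_iff]
  intro x hx
  have hfx : f x = 0 := hx
  have hxt : x = -(t x) := by
    rw [htdef]
    simp [hfx]
  set F : ℕ → Submodule (MonoidAlgebra (ZMod p) Γ) M :=
    fun k => (fun N' => augIdeal p Γ • N')^[k] ⊤ with hF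
  have hFsucc : ∀ k, F (k + 1) = augIdeal p Γ • F k := fun k =>
    Function.iterate_succ_apply' _ k ⊤
  have hmap : ∀ k, Submodule.map t (F k) ≤ F (k + 1) := by
    intro k
    induction k with
    | zero =>
      rintro y ⟨x', -, rfl⟩
      rw [hFsucc 0]
      exact ht x'
    | succ k ih =>
      rw [hFsucc k, hFsucc (k + 1), Submodule.map_smul'']
      exact Submodule.smul_mono le_rfl ih
  have hxk : ∀ k, x ∈ F k := by
    intro k
    induction k with
    | zero => exact Submodule.mem_top
    | succ k ih =>
      have : t x ∈ F (k + 1) := hmap k ⟨x, ih, rfl⟩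
      rw [hxt]
      exact neg_mem this
  have htrans : ∀ k, F k =
      ((fun J : Ideal (MonoidAlgebra (ZMod p) Γ) => augIdeal p Γ • J)^[k] ⊤) •
        (⊤ : Submodule (MonoidAlgebra (ZMod p) Γ) M) := by
    intro k
    induction k with
    | zero =>
      rw [Function.iterate_zero_apply, Submodule.top_smul, hF]
      rfl
    | succ k ih =>
      rw [hFsucc k, Function.iterate_succ_apply', ih, Submodule.smul_assoc]
  have := hxk m
  rw [htrans m, hm, Submodule.bot_smul] at this
  exact this
end

section
/- Let Γ be a finite p-group, and let C_* be a non-negative chain complex of right ℤ/p[Γ]-modules which is finitely generated and projective in dimensions 0 ≤ i ≤ m. If H_i(C_* ⊗_{ℤ/p[Γ]} ℤ/p) = 0 for 0 ≤ i ≤ m, then H_i(C_*) = 0 for 0 ≤ i ≤ m. -/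
/-- The cycles of a chain complex `(D_*, d_*)` in degree `q` (all of `D_0` in degree 0,
`ker d_{q}` in degree `q+1`). -/
@[reducible] noncomputable def cyclesSub {R : Type*} [Ring R] {D : ℕ → Type*}
    [∀ q, AddCommGroup (D q)] [∀ q, Module R (D q)]
    (d : ∀ q, D (q + 1) →ₗ[R] D q) : ∀ q, Submodule R (D q)
  | 0 => ⊤
  | (k + 1) => LinearMap.ker (d k)

/-- The degree-`q` homology of the chain complex `(D_*, d_*)`: cycles modulo
boundaries. -/
@[reducible] noncomputable def homologyOf {R : Type*} [Ring R] {D : ℕ → Type*}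
    [∀ q, AddCommGroup (D q)] [∀ q, Module R (D q)]
    (d : ∀ q, D (q + 1) →ₗ[R] D q) (q : ℕ) :=
  ↥(cyclesSub d q) ⧸
    Submodule.comap (cyclesSub d q).subtype (LinearMap.range (d q))




theorem aug_single (p : ℕ) (Γ : Type*) [Group Γ] (g : Γ) (c : ZMod p) :
    aug p Γ (MonoidAlgebra.single g c) = c := by
  simp [aug, MonoidAlgebra.lift_single]

theorem coinvSub_ne_top (p : ℕ) (hp : p.Prime) (Γ : Type*) [Group Γ] [Finite Γ]
    (hΓ : IsPGroup p Γ) (M : Type*) [AddCommGroup M]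
    [Module (MonoidAlgebra (ZMod p) Γ) M] [Finite M] [Nontrivial M] :
    coinvSub p Γ M ≠ ⊤ := by
  haveI : Fact p.Prime := ⟨hp⟩
  letI : Module (ZMod p) M :=
    Module.compHom M (algebraMap (ZMod p) (MonoidAlgebra (ZMod p) Γ))
  have hsmul : ∀ (c : ZMod p) (x : M),
      c • x = (algebraMap (ZMod p) (MonoidAlgebra (ZMod p) Γ) c) • x := fun c x => rfl
  -- the Γ-action on M by ZMod p-linear maps
  let ρ : Γ → M →ₗ[ZMod p] M := fun g =>
    { toFun := fun x => (MonoidAlgebra.of (ZMod p) Γ g) • x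
      map_add' := fun x y => smul_add _ x y
      map_smul' := fun c x => by
        simp only [RingHom.id_apply, hsmul, smul_smul]
        rw [Algebra.commutes] }
  have hρ : ∀ (g h : Γ) (x : M), ρ (g * h) x = ρ g (ρ h x) := by
    intro g h x
    simp only [ρ, LinearMap.coe_mk, AddHom.coe_mk, map_mul, mul_smul]
  letI act : MulAction Γ (M →ₗ[ZMod p] ZMod p) :=
    { smul := fun g f => f.comp (ρ g⁻¹)
      one_smul := fun f => by
        ext x
        show f (ρ 1⁻¹ x) = f x
        simp only [inv_one, ρ, LinearMap.coe_mk, AddHom.coe_mk, map_one, one_smul]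
      mul_smul := fun g h f => by
        ext x
        show f (ρ (g * h)⁻¹ x) = f (ρ h⁻¹ (ρ g⁻¹ x))
        rw [mul_inv_rev, hρ] }
  haveI : Finite (M →ₗ[ZMod p] ZMod p) :=
    Finite.of_injective (fun f => (f : M → ZMod p)) DFunLike.coe_injective
  -- a nonzero functional exists
  obtain ⟨m₀, hm₀⟩ := exists_ne (0 : M)
  have hne : ∃ φ : Module.Dual (ZMod p) M, φ m₀ ≠ 0 := by
    by_contra h
    push_neg at h
    exact hm₀ ((Module.forall_dual_apply_eq_zero_iff (ZMod p) m₀).mp h)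
  obtain ⟨φ₀, hφ₀⟩ := hne
  have hφ₀ne : φ₀ ≠ 0 := fun h => hφ₀ (by simp [h])
  -- p divides the cardinality of the dual
  have hpcard : p ∣ Nat.card (M →ₗ[ZMod p] ZMod p) := by
    have h1 : p • φ₀ = 0 := by
      ext x
      show p • (φ₀ x) = 0
      rw [nsmul_eq_mul, ZMod.natCast_self, zero_mul]
    have h2 : addOrderOf φ₀ ∣ p := addOrderOf_dvd_of_nsmul_eq_zero h1
    have h3 : addOrderOf φ₀ = p := by
      rcases (Nat.Prime.eq_one_or_self_of_dvd hp _ h2) with h | h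
      · exact absurd (AddMonoid.addOrderOf_eq_one_iff.mp h) hφ₀ne
      · exact h
    have h4 := addOrderOf_dvd_natCard φ₀
    rwa [h3] at h4
  -- a nonzero fixed functional exists
  have hmod := hΓ.card_modEq_card_fixedPoints (M →ₗ[ZMod p] ZMod p)
  have hpfix : p ∣ Nat.card (MulAction.fixedPoints Γ (M →ₗ[ZMod p] ZMod p)) := by
    have := (Nat.modEq_zero_iff_dvd.mpr hpcard).symm.trans hmod
    exact Nat.modEq_zero_iff_dvd.mp this.symm
  have hzero_fixed : (0 : M →ₗ[ZMod p] ZMod p) ∈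
      MulAction.fixedPoints Γ (M →ₗ[ZMod p] ZMod p) := by
    intro g
    show (0 : M →ₗ[ZMod p] ZMod p).comp (ρ g⁻¹) = 0
    exact LinearMap.zero_comp _
  obtain ⟨f, hf_mem, hf_ne⟩ : ∃ f : M →ₗ[ZMod p] ZMod p,
      f ∈ MulAction.fixedPoints Γ (M →ₗ[ZMod p] ZMod p) ∧ f ≠ 0 := by
    by_contra hc
    push_neg at hc
    have hset : MulAction.fixedPoints Γ (M →ₗ[ZMod p] ZMod p) = {0} := by
      ext f
      simp only [Set.mem_singleton_iff]
      exact ⟨fun hf => hc f hf, fun h => h ▸ hzero_fixed⟩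
    rw [hset] at hpfix
    simp only [Nat.card_unique] at hpfix
    have := Nat.le_of_dvd one_pos hpfix
    have := hp.two_le
    omega
  have hfcomm : ∀ (g : Γ) (x : M), f ((MonoidAlgebra.of (ZMod p) Γ) g • x) = f x := by
    intro g x
    have h1 : f.comp (ρ g⁻¹⁻¹) = f := hf_mem g⁻¹
    rw [inv_inv] at h1
    calc f ((MonoidAlgebra.of (ZMod p) Γ) g • x) = (f.comp (ρ g)) x := rfl
      _ = f x := by rw [h1]
  have hsc : ∀ (r : MonoidAlgebra (ZMod p) Γ) (n : M), f (r • n) = aug p Γ r * f n := by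
    intro r n
    induction r using MonoidAlgebra.induction_linear with
    | zero =>
      have : (0 : MonoidAlgebra (ZMod p) Γ) • n = 0 := zero_smul _ n
      rw [this, map_zero, map_zero, zero_mul]
    | add a b ha hb => rw [add_smul, map_add, ha, hb, map_add, add_mul]
    | single g c =>
      rw [aug_single]
      have e1 : (MonoidAlgebra.single g c : MonoidAlgebra (ZMod p) Γ)
          = c • ((MonoidAlgebra.of (ZMod p) Γ) g) := by
        rw [MonoidAlgebra.smul_of]
      have e2 : ∀ (r : MonoidAlgebra (ZMod p) Γ), (c • r) • n = c • (r • n) := by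
        intro r
        rw [Algebra.smul_def, mul_smul, hsmul]
      rw [e1, e2, map_smul, hfcomm, smul_eq_mul]
  have hkill : ∀ x ∈ coinvSub p Γ M, f x = 0 := by
    intro x hx
    refine Submodule.smul_induction_on hx ?_ ?_
    · intro r hr n _
      rw [hsc r n, show aug p Γ r = 0 from RingHom.mem_ker.mp hr, zero_mul]
    · intro x y hx hy
      rw [map_add, hx, hy, add_zero]
  intro htop
  exact hf_ne (LinearMap.ext fun x => hkill x (htop.ge Submodule.mem_top))

theorem bij_of_coinv_id (p : ℕ) (hp : p.Prime) (Γ : Type*) [Group Γ] [Finite Γ]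
    (hΓ : IsPGroup p Γ) (M : Type*) [AddCommGroup M]
    [Module (MonoidAlgebra (ZMod p) Γ) M] [Finite M]
    (φ : M →ₗ[MonoidAlgebra (ZMod p) Γ] M)
    (h : ∀ x, φ x - x ∈ coinvSub p Γ M) : Function.Bijective φ := by
  have hsurj : Function.Surjective φ := by
    by_contra hns
    have hN : LinearMap.range φ ≠ ⊤ := by rwa [Ne, LinearMap.range_eq_top]
    haveI : Nontrivial (M ⧸ LinearMap.range φ) :=
      Submodule.Quotient.nontrivial_iff.mpr hN
    haveI : Finite (M ⧸ LinearMap.range φ) :=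
      Finite.of_surjective _ (Submodule.mkQ_surjective (LinearMap.range φ))
    apply coinvSub_ne_top p hp Γ hΓ (M ⧸ LinearMap.range φ)
    rw [eq_top_iff]
    rintro x -
    obtain ⟨y, rfl⟩ := Submodule.mkQ_surjective (LinearMap.range φ) x
    have h1 : (LinearMap.range φ).mkQ y = (LinearMap.range φ).mkQ (y - φ y) := by
      have : (LinearMap.range φ).mkQ (φ y) = 0 := by
        rw [Submodule.mkQ_apply, Submodule.Quotient.mk_eq_zero]
        exact LinearMap.mem_range_self φ y
      rw [map_sub, this, sub_zero]
    rw [h1]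
    have h2 : y - φ y ∈ coinvSub p Γ M := by
      have := neg_mem (h y)
      rwa [neg_sub] at this
    have h3 : Submodule.map (LinearMap.range φ).mkQ (coinvSub p Γ M) ≤
        coinvSub p Γ (M ⧸ LinearMap.range φ) := by
      rw [coinvSub, coinvSub, Submodule.map_smul'']
      exact Submodule.smul_mono le_rfl le_top
    exact h3 ⟨_, h2, rfl⟩
  exact ⟨Finite.injective_iff_surjective.mpr hsurj, hsurj⟩


theorem lift_step (p : ℕ) (Γ : Type*) [Group Γ] {A B : Type*} [AddCommGroup A]
    [AddCommGroup B] [Module (MonoidAlgebra (ZMod p) Γ) A]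
    [Module (MonoidAlgebra (ZMod p) Γ) B]
    [Module.Projective (MonoidAlgebra (ZMod p) Γ) A]
    (f : B →ₗ[MonoidAlgebra (ZMod p) Γ] A)
    (w : A →ₗ[MonoidAlgebra (ZMod p) Γ] A)
    (hw : ∀ x : A, Submodule.Quotient.mk (p := coinvSub p Γ A) (w x) ∈
      LinearMap.range (coinvMap p Γ f)) :
    ∃ s : A →ₗ[MonoidAlgebra (ZMod p) Γ] B, ∀ x, f (s x) - w x ∈ coinvSub p Γ A := by
  set T := LinearMap.range (coinvMap p Γ f) with hT
  let F : B →ₗ[MonoidAlgebra (ZMod p) Γ] T :=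
    LinearMap.codRestrict T ((coinvMap p Γ f).comp (coinvSub p Γ B).mkQ)
      (fun x => LinearMap.mem_range_self (coinvMap p Γ f) ((coinvSub p Γ B).mkQ x))
  have hF : Function.Surjective F := by
    rintro ⟨y, hy⟩
    obtain ⟨c, rfl⟩ := hy
    obtain ⟨x, rfl⟩ := Submodule.mkQ_surjective (coinvSub p Γ B) c
    exact ⟨x, rfl⟩
  let G : A →ₗ[MonoidAlgebra (ZMod p) Γ] T :=
    LinearMap.codRestrict T ((coinvSub p Γ A).mkQ.comp w) (fun x => hw x)
  obtain ⟨s, hs⟩ := Module.projective_lifting_property F G hF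
  refine ⟨s, fun x => ?_⟩
  have h1 : ((F (s x) : T) : A ⧸ coinvSub p Γ A) = ((G x : T) : A ⧸ coinvSub p Γ A) := by
    rw [show F (s x) = G x from congrFun (congrArg (fun g => g.toFun) hs) x]
  have h2 : Submodule.Quotient.mk (p := coinvSub p Γ A) (f (s x)) =
      Submodule.Quotient.mk (p := coinvSub p Γ A) (w x) := by
    have e1 : ((F (s x) : T) : A ⧸ coinvSub p Γ A) =
        Submodule.Quotient.mk (p := coinvSub p Γ A) (f (s x)) := by
      show coinvMap p Γ f (Submodule.Quotient.mk (s x)) = _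
      rw [coinvMap, Submodule.mapQ_apply]
    have e2 : ((G x : T) : A ⧸ coinvSub p Γ A) =
        Submodule.Quotient.mk (p := coinvSub p Γ A) (w x) := rfl
    rw [← e1, ← e2, h1]
  rwa [Submodule.Quotient.eq] at h2


/-- if `C_*` is a non-negative chain complex of right `ℤ/p[Γ]`-modules
(`Γ` a finite p-group) which is finitely generated and projective in dimensions
`i ≤ m`, and `H_i(C_* ⊗_{ℤ/p[Γ]} ℤ/p) = 0` for `i ≤ m`, then `H_i(C_*) = 0` for
`i ≤ m`. -/
theorem homology_subsingleton_of_coinv_homology_subsingleton (p : ℕ) (hp : p.Prime)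
    (Γ : Type*) [Group Γ] [Finite Γ] (hΓ : IsPGroup p Γ)
    (C : ℕ → Type*) [∀ q, AddCommGroup (C q)]
    [∀ q, Module (MonoidAlgebra (ZMod p) Γ) (C q)]
    (m : ℕ)
    (hfin : ∀ i, i ≤ m → Module.Finite (MonoidAlgebra (ZMod p) Γ) (C i))
    (hproj : ∀ i, i ≤ m → Module.Projective (MonoidAlgebra (ZMod p) Γ) (C i))
    (d : ∀ q, C (q + 1) →ₗ[MonoidAlgebra (ZMod p) Γ] C q)
    (hd : ∀ q, (d q).comp (d (q + 1)) = 0)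
    (hvanish : ∀ i, i ≤ m →
      Subsingleton (homologyOf (D := fun q => C q ⧸ coinvSub p Γ (C q))
        (fun q => coinvMap p Γ (d q)) i)) :
    ∀ i, i ≤ m → Subsingleton (homologyOf d i) := by
  haveI : NeZero p := ⟨hp.ne_zero⟩
  haveI hfR : Finite (MonoidAlgebra (ZMod p) Γ) :=
    Finite.of_equiv (Γ → ZMod p) ((Finsupp.equivFunOnFinite (α := Γ) (M := ZMod p)).symm.trans MonoidAlgebra.coeffEquiv.symm)
  have hexact : ∀ j, j ≤ m → ∀ z : (C j ⧸ coinvSub p Γ (C j)),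
      z ∈ cyclesSub (D := fun q => C q ⧸ coinvSub p Γ (C q))
        (fun q => coinvMap p Γ (d q)) j →
      z ∈ LinearMap.range (coinvMap p Γ (d j)) := by
    intro j hj z hz
    have h1 := Submodule.Quotient.subsingleton_iff.mp (hvanish j hj)
    have h2 : (⟨z, hz⟩ : cyclesSub (D := fun q => C q ⧸ coinvSub p Γ (C q))
        (fun q => coinvMap p Γ (d q)) j) ∈
        Submodule.comap (cyclesSub (D := fun q => C q ⧸ coinvSub p Γ (C q))
          (fun q => coinvMap p Γ (d q)) j).subtype
          (LinearMap.range (coinvMap p Γ (d j))) := h1.ge Submodule.mem_top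
    exact h2
  have key : ∀ j, ∃ (w : C j →ₗ[MonoidAlgebra (ZMod p) Γ] C j)
      (t : C j →ₗ[MonoidAlgebra (ZMod p) Γ] C (j+1)),
      (∀ x : C (j+1), w (d j x) = d j x) ∧
      (∀ x : C j, x ∈ cyclesSub d j → w x = x) ∧
      (j ≤ m → ∀ x : C j, d j (t x) - w x ∈ coinvSub p Γ (C j)) := by
    intro j
    induction j with
    | zero =>
      haveI := hproj 0 (Nat.zero_le m)
      obtain ⟨t, ht⟩ := lift_step p Γ (d 0) LinearMap.id (fun x =>
        hexact 0 (Nat.zero_le m) _ Submodule.mem_top)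
      exact ⟨LinearMap.id, t, fun x => rfl, fun x _ => rfl, fun _ x => by simpa using ht x⟩
    | succ j ih =>
      obtain ⟨w, t, hw1, hw2, hw3⟩ := ih
      set w' : C (j+1) →ₗ[MonoidAlgebra (ZMod p) Γ] C (j+1) :=
        LinearMap.id - t ∘ₗ d j with hw'def
      have hw'app : ∀ x : C (j+1), w' x = x - t (d j x) := by
        intro x
        rw [hw'def]
        simp only [LinearMap.sub_apply, LinearMap.comp_apply, LinearMap.id_apply]
      refine ⟨w', ?_⟩
      have hw'1 : ∀ x : C (j+2), w' (d (j+1) x) = d (j+1) x := by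
        intro x
        have hz : d j (d (j+1) x) = 0 := by
          have := congrArg (fun (g : C (j+2) →ₗ[MonoidAlgebra (ZMod p) Γ] C j) => g x) (hd j)
          simpa using this
        rw [hw'app, hz, map_zero, sub_zero]
      have hw'2 : ∀ x : C (j+1), x ∈ cyclesSub d (j+1) → w' x = x := by
        intro x hx
        have hx' : d j x = 0 := hx
        rw [hw'app, hx', map_zero, sub_zero]
      by_cases hj : j + 1 ≤ m
      · have hside : ∀ x : C (j+1),
            Submodule.Quotient.mk (p := coinvSub p Γ (C (j+1))) (w' x) ∈
              LinearMap.range (coinvMap p Γ (d (j+1))) := by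
          intro x
          apply hexact (j+1) hj
          show _ ∈ LinearMap.ker (coinvMap p Γ (d j))
          rw [LinearMap.mem_ker, coinvMap, Submodule.mapQ_apply,
            Submodule.Quotient.mk_eq_zero]
          have h1 := hw3 (Nat.le_of_succ_le hj) (d j x)
          rw [hw1 x] at h1
          have e : d j (w' x) = -(d j (t (d j x)) - d j x) := by
            rw [hw'app, map_sub, neg_sub]
          rw [e]
          exact neg_mem h1
        haveI := hproj (j+1) hj
        obtain ⟨t', ht'⟩ := lift_step p Γ (d (j+1)) w' hside
        exact ⟨t', hw'1, hw'2, fun _ => ht'⟩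
      · exact ⟨0, hw'1, hw'2, fun h => absurd h hj⟩
  intro i him
  obtain ⟨w, t, hw1, hw2, hw3⟩ := key i
  haveI := hfin i him
  haveI : Finite (C i) := Module.finite_of_finite (MonoidAlgebra (ZMod p) Γ)
  set φ := (d i) ∘ₗ t + (LinearMap.id - w) with hφdef
  have hφ : ∀ x, φ x - x ∈ coinvSub p Γ (C i) := by
    intro x
    have e : φ x - x = d i (t x) - w x := by
      simp only [hφdef, LinearMap.add_apply, LinearMap.sub_apply, LinearMap.comp_apply,
        LinearMap.id_apply]
      abel
    rw [e]
    exact hw3 him x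
  have hbij := bij_of_coinv_id p hp Γ hΓ (C i) φ hφ
  have hBZ : (LinearMap.range (d i) : Set (C i)) ⊆ (cyclesSub d i : Set (C i)) := by
    rintro y ⟨a, rfl⟩
    cases i with
    | zero => trivial
    | succ j =>
      show d j (d (j+1) a) = 0
      have := congrArg (fun (g : C (j+2) →ₗ[MonoidAlgebra (ZMod p) Γ] C j) => g a) (hd j)
      simpa using this
  have himg : φ '' (cyclesSub d i : Set (C i)) ⊆ (LinearMap.range (d i) : Set (C i)) := by
    rintro y ⟨z, hz, rfl⟩
    have e : φ z = d i (t z) := by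
      simp only [hφdef, LinearMap.add_apply, LinearMap.sub_apply, LinearMap.comp_apply,
        LinearMap.id_apply, hw2 z hz]
      abel
    rw [e]
    exact LinearMap.mem_range_self _ _
  have h1 : (cyclesSub d i : Set (C i)).ncard = (φ '' (cyclesSub d i : Set (C i))).ncard :=
    (Set.ncard_image_of_injective _ hbij.1).symm
  have h2 := Set.ncard_le_ncard himg (Set.toFinite _)
  have h3 : (LinearMap.range (d i) : Set (C i)) = (cyclesSub d i : Set (C i)) :=
    Set.eq_of_subset_of_ncard_le hBZ (by rw [h1]; exact h2) (Set.toFinite _)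
  have hT : Submodule.comap (cyclesSub d i).subtype (LinearMap.range (d i)) = ⊤ := by
    rw [eq_top_iff]
    rintro ⟨z, hz⟩ -
    show z ∈ (LinearMap.range (d i) : Set (C i))
    rw [h3]
    exact hz
  exact Submodule.Quotient.subsingleton_iff.mpr hT
end

section
/- Suppose φ: A → B induces an isomorphism on H_1(−; ℤ/p) and the composition H_2(A; ℤ/p) → H_2(B; ℤ/p) → H_2(B; ℤ/p)/Φ_{p,m}(B) is surjective, where Φ_{p,m}(B) = ker(H_2(B; ℤ/p) → H_2(B/B_{p,m}; ℤ/p)). Then for every n ≤ m+1, φ induces an isomorphism A/A_{p,n} → B/B_{p,n}. -/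
open scoped commutatorElement

/-- The p-lower central series, indexed as in the paper: `G_{p,1} = G`,
`G_{p,n+1} = (G_{p,n})^p [G_{p,n}, G]`.  (The value at `0` is set to `⊤`.) -/
def lowerP (p : ℕ) (G : Type*) [Group G] : ℕ → Subgroup G
  | 0 => ⊤
  | 1 => ⊤
  | (k + 2) =>
      Subgroup.closure
        ({x | ∃ a ∈ lowerP p G (k + 1), x = a ^ p} ∪
         {x | ∃ a ∈ lowerP p G (k + 1), ∃ b : G, x = ⁅a, b⁆})

theorem lowerP_map_le {G H : Type*} [Group G] [Group H] (p : ℕ) (φ : G →* H) :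
    ∀ n, (lowerP p G n).map φ ≤ lowerP p H n
  | 0 => le_top
  | 1 => le_top
  | (k + 2) => by
      show (Subgroup.closure _).map φ ≤ Subgroup.closure _
      rw [MonoidHom.map_closure]
      apply Subgroup.closure_mono
      rintro x ⟨y, hy | hy, rfl⟩
      · obtain ⟨a, ha, rfl⟩ := hy
        exact Or.inl ⟨φ a, lowerP_map_le p φ (k + 1) (Subgroup.mem_map_of_mem φ ha), by simp⟩
      · obtain ⟨a, ha, b, rfl⟩ := hy
        exact Or.inr ⟨φ a, lowerP_map_le p φ (k + 1) (Subgroup.mem_map_of_mem φ ha),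
          φ b, by simp [commutatorElement_def]⟩

instance lowerP_normal (p : ℕ) {G : Type*} [Group G] (n : ℕ) : (lowerP p G n).Normal := by
  constructor
  intro x hx g
  have := lowerP_map_le p (MulAut.conj g).toMonoidHom n (Subgroup.mem_map_of_mem _ hx)
  simpa using this

/-- The map `A/A_{p,n} → B/B_{p,n}` induced by `φ`. -/
def lowerPQuotMap {G H : Type*} [Group G] [Group H] (p : ℕ) (φ : G →* H) (n : ℕ) :
    G ⧸ lowerP p G n →* H ⧸ lowerP p H n :=
  QuotientGroup.map _ _ φ (Subgroup.map_le_iff_le_comap.mp (lowerP_map_le p φ n))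


open Finsupp

section BarHomology
variable (p : ℕ)

/-- Degree-2 differential of the inhomogeneous bar complex computing `H_*(G; ℤ/p)`
(trivial coefficients): `[g|h] ↦ [h] - [gh] + [g]`. -/
noncomputable def barD2 (G : Type*) [Group G] : ((G × G) →₀ ZMod p) →ₗ[ZMod p] (G →₀ ZMod p) :=
  Finsupp.lift _ (ZMod p) _ fun x =>
    single x.2 1 - single (x.1 * x.2) 1 + single x.1 1

/-- Degree-3 differential of the inhomogeneous bar complex:
`[g|h|j] ↦ [h|j] - [gh|j] + [g|hj] - [g|h]`. -/
noncomputable def barD3 (G : Type*) [Group G] :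
    ((G × G × G) →₀ ZMod p) →ₗ[ZMod p] ((G × G) →₀ ZMod p) :=
  Finsupp.lift _ (ZMod p) _ fun x =>
    single (x.2.1, x.2.2) 1 - single (x.1 * x.2.1, x.2.2) 1
      + single (x.1, x.2.1 * x.2.2) 1 - single (x.1, x.2.1) 1

/-- `H_1(G; ℤ/p)`, group homology with (trivial) coefficients `ℤ/p`, computed from the
bar complex: since the coefficients are trivial the degree-1 differential is zero, so
`H_1` is the quotient of the 1-chains by the image of `barD2`. -/
@[reducible] noncomputable def groupH1 (G : Type*) [Group G] :=
  (G →₀ ZMod p) ⧸ LinearMap.range (barD2 p G)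

/-- `H_2(G; ℤ/p)`, group homology with (trivial) coefficients `ℤ/p`, computed from the
bar complex: the 2-cycles modulo the 2-boundaries, realized as the image of the
2-cycles in the quotient of the 2-chains by the 2-boundaries. -/
@[reducible] noncomputable def groupH2 (G : Type*) [Group G] :=
  ↥(Submodule.map (Submodule.mkQ (LinearMap.range (barD3 p G)))
      (LinearMap.ker (barD2 p G)))

variable {G H : Type*} [Group G] [Group H]

lemma barD2_single (x : G × G) (b : ZMod p) :
    barD2 p G (single x b) = b • (single x.2 1 - single (x.1 * x.2) 1 + single x.1 1) := by
  simp [barD2, Finsupp.lift_apply, Finsupp.sum_single_index]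

lemma barD3_single (x : G × G × G) (b : ZMod p) :
    barD3 p G (single x b) = b • (single (x.2.1, x.2.2) 1 - single (x.1 * x.2.1, x.2.2) 1
      + single (x.1, x.2.1 * x.2.2) 1 - single (x.1, x.2.1) 1) := by
  simp [barD3, Finsupp.lift_apply, Finsupp.sum_single_index]

lemma lmap_single {α β : Type*} (f : α → β) (a : α) (b : ZMod p) :
    Finsupp.lmapDomain (ZMod p) (ZMod p) f (single a b) = single (f a) b := by
  simp [Finsupp.lmapDomain_apply, Finsupp.mapDomain_single]

lemma barD2_comm (φ : G →* H) :
    (barD2 p H).comp (Finsupp.lmapDomain (ZMod p) (ZMod p) (Prod.map φ φ)) =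
      (Finsupp.lmapDomain (ZMod p) (ZMod p) φ).comp (barD2 p G) := by
  apply Finsupp.lhom_ext
  intro a b
  simp only [LinearMap.coe_comp, Function.comp_apply, lmap_single, barD2_single,
    map_smul, map_sub, map_add, Prod.map_apply, Prod.map_fst, Prod.map_snd, map_mul]

lemma barD3_comm (φ : G →* H) :
    (barD3 p H).comp (Finsupp.lmapDomain (ZMod p) (ZMod p) (Prod.map φ (Prod.map φ φ))) =
      (Finsupp.lmapDomain (ZMod p) (ZMod p) (Prod.map φ φ)).comp (barD3 p G) := by
  apply Finsupp.lhom_ext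
  intro a b
  simp only [LinearMap.coe_comp, Function.comp_apply, lmap_single, barD3_single,
    map_smul, map_sub, map_add, Prod.map_apply, Prod.map_fst, Prod.map_snd, map_mul]

/-- The map `H_1(G; ℤ/p) → H_1(H; ℤ/p)` induced by a group homomorphism. -/
noncomputable def groupH1Map (φ : G →* H) : groupH1 p G →ₗ[ZMod p] groupH1 p H :=
  Submodule.mapQ _ _ (Finsupp.lmapDomain (ZMod p) (ZMod p) φ) (by
    rintro x ⟨y, rfl⟩
    exact ⟨Finsupp.lmapDomain (ZMod p) (ZMod p) (Prod.map φ φ) y,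
      congrFun (congrArg DFunLike.coe (barD2_comm p φ)) y⟩)

/-- The map on 2-chains modulo 2-boundaries induced by a group homomorphism. -/
noncomputable def barQ2Map (φ : G →* H) :
    ((G × G) →₀ ZMod p) ⧸ LinearMap.range (barD3 p G) →ₗ[ZMod p]
      ((H × H) →₀ ZMod p) ⧸ LinearMap.range (barD3 p H) :=
  Submodule.mapQ _ _ (Finsupp.lmapDomain (ZMod p) (ZMod p) (Prod.map φ φ)) (by
    rintro x ⟨y, rfl⟩
    exact ⟨Finsupp.lmapDomain (ZMod p) (ZMod p) (Prod.map φ (Prod.map φ φ)) y,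
      congrFun (congrArg DFunLike.coe (barD3_comm p φ)) y⟩)

/-- The map `H_2(G; ℤ/p) → H_2(H; ℤ/p)` induced by a group homomorphism. -/
noncomputable def groupH2Map (φ : G →* H) : groupH2 p G →ₗ[ZMod p] groupH2 p H :=
  (barQ2Map p φ).restrict (p := Submodule.map (Submodule.mkQ (LinearMap.range (barD3 p G)))
      (LinearMap.ker (barD2 p G)))
    (q := Submodule.map (Submodule.mkQ (LinearMap.range (barD3 p H)))
      (LinearMap.ker (barD2 p H)))
    (by
      rintro x ⟨y, hy, rfl⟩
      refine ⟨Finsupp.lmapDomain (ZMod p) (ZMod p) (Prod.map φ φ) y, ?_, ?_⟩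
      · have h := congrFun (congrArg DFunLike.coe (barD2_comm p φ)) y
        simp only [LinearMap.coe_comp, Function.comp_apply] at h
        exact LinearMap.mem_ker.mpr (by rw [h, LinearMap.mem_ker.mp hy, map_zero])
      · show barQ2Map p φ (Submodule.mkQ _ y) = Submodule.mkQ _ _
        rw [Submodule.mkQ_apply, Submodule.mkQ_apply, barQ2Map, Submodule.mapQ_apply])

end BarHomology

section LowerPLemmas
variable (p : ℕ) {G : Type*} [Group G]

lemma pow_mem_lowerP {a : G} {k : ℕ} (ha : a ∈ lowerP p G (k+1)) :
    a ^ p ∈ lowerP p G (k+2) :=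
  Subgroup.subset_closure (Or.inl ⟨a, ha, rfl⟩)

lemma commutator_mem_lowerP {a : G} {k : ℕ} (ha : a ∈ lowerP p G (k+1)) (b : G) :
    ⁅a, b⁆ ∈ lowerP p G (k+2) :=
  Subgroup.subset_closure (Or.inr ⟨a, ha, b, rfl⟩)

lemma commutator_mem_lowerP' {a : G} {k : ℕ} (ha : a ∈ lowerP p G (k+1)) (b : G) :
    b * a * b⁻¹ * a⁻¹ ∈ lowerP p G (k+2) := by
  have := (lowerP p G (k+2)).inv_mem (commutator_mem_lowerP p ha b)
  rwa [commutatorElement_inv, commutatorElement_def] at this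

lemma lowerP_succ_le : ∀ n : ℕ, lowerP p G (n+1) ≤ lowerP p G n
  | 0 => le_top
  | 1 => le_top
  | (k+2) => by
      show lowerP p G (k+3) ≤ lowerP p G (k+2)
      refine Subgroup.closure_le _ |>.mpr ?_
      rintro x (⟨a, ha, rfl⟩ | ⟨a, ha, b, rfl⟩)
      · exact pow_mem ha p
      · rw [commutatorElement_def, mul_assoc, mul_assoc]
        exact mul_mem ha (by
          have : b * a⁻¹ * b⁻¹ ∈ lowerP p G (k+2) :=
            (lowerP_normal p (k+2)).conj_mem _ ((lowerP p G (k+2)).inv_mem ha) b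
          simpa [mul_assoc] using this)

lemma lowerP_le_of_le {n n' : ℕ} (h : n ≤ n') : lowerP p G n' ≤ lowerP p G n := by
  induction h with
  | refl => exact le_rfl
  | step _ ih => exact le_trans (lowerP_succ_le p _) ih

end LowerPLemmas
namespace StallingsAux

variable (p : ℕ) (G : Type*) [Group G] (n : ℕ)

/-- the projection `G → G/G_{p,n+1}` -/
abbrev pi : G →* G ⧸ lowerP p G (n+1) := QuotientGroup.mk' _

/-- the projection `G → G/G_{p,n+2}` -/
abbrev XX : G →* G ⧸ lowerP p G (n+2) := QuotientGroup.mk' _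

/-- the image of `G_{p,n+1}` in `G/G_{p,n+2}` -/
def Msub : Subgroup (G ⧸ lowerP p G (n+2)) := (lowerP p G (n+1)).map (XX p G n)

variable {G n}

lemma XX_conj {ν : G} (hν : ν ∈ lowerP p G (n+1)) (x : G) :
    XX p G n (x * ν * x⁻¹) = XX p G n ν := by
  have h : x * ν * x⁻¹ * ν⁻¹ ∈ lowerP p G (n+2) := commutator_mem_lowerP' p hν x
  have h2 : XX p G n (x * ν * x⁻¹ * ν⁻¹) = 1 := (QuotientGroup.eq_one_iff _).mpr h
  have h3 : XX p G n (x * ν * x⁻¹) * (XX p G n ν)⁻¹ = 1 := by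
    rw [← map_inv, ← map_mul]; exact h2
  exact mul_inv_eq_one.mp h3

lemma XX_central {ν : G} (hν : ν ∈ lowerP p G (n+1)) (y : G ⧸ lowerP p G (n+2)) :
    XX p G n ν * y = y * XX p G n ν := by
  induction y using QuotientGroup.induction_on with
  | H x =>
    have h2 : XX p G n x * XX p G n ν * (XX p G n x)⁻¹ = XX p G n ν := by
      rw [← map_inv, ← map_mul, ← map_mul]; exact XX_conj p hν x
    show XX p G n ν * XX p G n x = XX p G n x * XX p G n ν
    calc XX p G n ν * XX p G n x
        = (XX p G n x * XX p G n ν * (XX p G n x)⁻¹) * XX p G n x := by rw [h2]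
      _ = XX p G n x * XX p G n ν := by group

instance : CommGroup ↥(Msub p G n) :=
  { (inferInstance : Group ↥(Msub p G n)) with
    mul_comm := by
      rintro ⟨a, ν, hν, rfl⟩ b
      apply Subtype.ext
      exact XX_central p hν b.1 }

lemma Msub_pow_eq_one (x : ↥(Msub p G n)) : x ^ p = 1 := by
  obtain ⟨a, ν, hν, rfl⟩ := x
  apply Subtype.ext
  show (XX p G n ν) ^ p = 1
  rw [← map_pow]
  exact (QuotientGroup.eq_one_iff _).mpr (pow_mem_lowerP p hν)

noncomputable instance : Module (ZMod p) (Additive ↥(Msub p G n)) :=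
  AddCommGroup.zmodModule (by
    intro x
    show p • x = 0
    rw [← ofMul_toMul x, ← ofMul_pow, Msub_pow_eq_one]
    simp)

variable (G n)

/-- the 2-cocycle associated to the section `Quotient.out` -/
noncomputable def fQ (q r : G ⧸ lowerP p G (n+1)) : G :=
  q.out * r.out * (q * r).out⁻¹

lemma fQ_mem (q r : G ⧸ lowerP p G (n+1)) : fQ p G n q r ∈ lowerP p G (n+1) := by
  have : ((fQ p G n q r : G) : G ⧸ lowerP p G (n+1)) = 1 := by
    show QuotientGroup.mk _ = 1
    rw [fQ]
    rw [QuotientGroup.mk_mul, QuotientGroup.mk_mul, QuotientGroup.mk_inv]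
    rw [QuotientGroup.out_eq', QuotientGroup.out_eq', QuotientGroup.out_eq']
    group
  exact (QuotientGroup.eq_one_iff _).mp this

/-- the cocycle as element of `Msub` -/
noncomputable def Fm (q r : G ⧸ lowerP p G (n+1)) : ↥(Msub p G n) :=
  ⟨XX p G n (fQ p G n q r), Subgroup.mem_map_of_mem _ (fQ_mem p G n q r)⟩

/-- the chain-level map `δ` on 2-chains of `Q` -/
noncomputable def deltaC :
    ((G ⧸ lowerP p G (n+1)) × (G ⧸ lowerP p G (n+1)) →₀ ZMod p) →ₗ[ZMod p]
      Additive ↥(Msub p G n) :=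
  Finsupp.lift _ (ZMod p) _ fun x => Additive.ofMul (Fm p G n x.1 x.2)

lemma deltaC_single (x : (G ⧸ lowerP p G (n+1)) × (G ⧸ lowerP p G (n+1))) (b : ZMod p) :
    deltaC p G n (single x b) = b • (Additive.ofMul (Fm p G n x.1 x.2)) := by
  simp [deltaC, Finsupp.lift_apply, Finsupp.sum_single_index]

lemma fQ_cocycle (q r s : G ⧸ lowerP p G (n+1)) :
    fQ p G n q r * fQ p G n (q * r) s
      = (q.out * fQ p G n r s * q.out⁻¹) * fQ p G n q (r * s) := by
  simp only [fQ, mul_assoc]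
  group

lemma Fm_cocycle (q r s : G ⧸ lowerP p G (n+1)) :
    Fm p G n q r * Fm p G n (q * r) s = Fm p G n r s * Fm p G n q (r * s) := by
  apply Subtype.ext
  show XX p G n (fQ p G n q r) * XX p G n (fQ p G n (q * r) s)
      = XX p G n (fQ p G n r s) * XX p G n (fQ p G n q (r * s))
  rw [← map_mul, fQ_cocycle, map_mul, XX_conj p (fQ_mem p G n r s)]

/-- K0 : `δ` kills boundaries -/
lemma deltaC_comp_barD3 :
    (deltaC p G n).comp (barD3 p ((G ⧸ lowerP p G (n+1)))) = 0 := by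
  apply Finsupp.lhom_ext
  rintro ⟨q, r, s⟩ b
  simp only [LinearMap.coe_comp, Function.comp_apply, barD3_single, map_smul, map_sub, map_add,
    deltaC_single, LinearMap.zero_apply, one_smul]
  have h := Fm_cocycle p G n q r s
  have key : Additive.ofMul (Fm p G n (q*r) s) + Additive.ofMul (Fm p G n q r)
      = Additive.ofMul (Fm p G n r s) + Additive.ofMul (Fm p G n q (r*s)) := by
    rw [← ofMul_mul, ← ofMul_mul, mul_comm (Fm p G n (q*r) s), h]
  have hz : Additive.ofMul (Fm p G n r s) - Additive.ofMul (Fm p G n (q*r) s)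
      + Additive.ofMul (Fm p G n q (r*s)) - Additive.ofMul (Fm p G n q r) = 0 := by
    rw [show Additive.ofMul (Fm p G n r s) - Additive.ofMul (Fm p G n (q*r) s)
      + Additive.ofMul (Fm p G n q (r*s)) - Additive.ofMul (Fm p G n q r)
      = (Additive.ofMul (Fm p G n r s) + Additive.ofMul (Fm p G n q (r*s)))
        - (Additive.ofMul (Fm p G n (q*r) s) + Additive.ofMul (Fm p G n q r)) from by abel,
      ← key, sub_self]
  rw [hz, smul_zero]
/-- the error term of the section -/
noncomputable def eg (g : G) : G := (Quotient.out (pi p G n g))⁻¹ * g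

lemma eg_mem (g : G) : eg p G n g ∈ lowerP p G (n+1) := by
  have : ((eg p G n g : G) : G ⧸ lowerP p G (n+1)) = 1 := by
    show QuotientGroup.mk _ = 1
    rw [eg, QuotientGroup.mk_mul, QuotientGroup.mk_inv, QuotientGroup.out_eq']
    show (pi p G n g)⁻¹ * pi p G n g = 1
    group
  exact (QuotientGroup.eq_one_iff _).mp this

noncomputable def Em (g : G) : ↥(Msub p G n) :=
  ⟨XX p G n (eg p G n g), Subgroup.mem_map_of_mem _ (eg_mem p G n g)⟩

noncomputable def Ec : (G →₀ ZMod p) →ₗ[ZMod p] Additive ↥(Msub p G n) :=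
  Finsupp.lift _ (ZMod p) _ fun g => Additive.ofMul (Em p G n g)

lemma Ec_single (g : G) (b : ZMod p) :
    Ec p G n (single g b) = b • Additive.ofMul (Em p G n g) := by
  simp [Ec, Finsupp.lift_apply, Finsupp.sum_single_index]

lemma fQ_pi_pi (g h : G) : fQ p G n (pi p G n g) (pi p G n h) =
    (g * (eg p G n g)⁻¹ * g⁻¹) *
      ((g * h) * ((eg p G n h)⁻¹ * eg p G n (g * h)) * (g * h)⁻¹) := by
  simp only [fQ, eg, ← map_mul]
  group

lemma Fm_pi_pi (g h : G) : Fm p G n (pi p G n g) (pi p G n h) =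
    (Em p G n g)⁻¹ * ((Em p G n h)⁻¹ * Em p G n (g * h)) := by
  apply Subtype.ext
  show XX p G n (fQ p G n (pi p G n g) (pi p G n h))
      = (XX p G n (eg p G n g))⁻¹ * ((XX p G n (eg p G n h))⁻¹ * XX p G n (eg p G n (g * h)))
  rw [fQ_pi_pi, map_mul,
    XX_conj p ((lowerP p G (n+1)).inv_mem (eg_mem p G n g)),
    XX_conj p (mul_mem ((lowerP p G (n+1)).inv_mem (eg_mem p G n h)) (eg_mem p G n (g*h))),
    map_inv, map_mul, map_inv]

/-- K1 : image of `H₂(G)` is killed by `δ` (chain level) -/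
lemma deltaC_comp_piMap :
    (deltaC p G n).comp
        (Finsupp.lmapDomain (ZMod p) (ZMod p) (Prod.map (pi p G n) (pi p G n)))
      = -((Ec p G n).comp (barD2 p G)) := by
  apply Finsupp.lhom_ext
  rintro ⟨g, h⟩ b
  simp only [LinearMap.coe_comp, Function.comp_apply, lmap_single, barD2_single, map_smul,
    map_sub, map_add, deltaC_single, Ec_single, LinearMap.neg_apply, Prod.map_apply, one_smul]
  rw [← smul_neg]
  congr 1
  rw [Fm_pi_pi]
  simp only [ofMul_mul, ofMul_inv]
  abel

/-- `δ` at the level of `H₂` -/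
noncomputable def deltaH :
    groupH2 p (G ⧸ lowerP p G (n+1)) →ₗ[ZMod p] Additive ↥(Msub p G n) :=
  (Submodule.liftQ (LinearMap.range (barD3 p _)) (deltaC p G n) (by
      rintro x ⟨y, rfl⟩
      have := congrFun (congrArg DFunLike.coe (deltaC_comp_barD3 p G n)) y
      simpa using this)).comp
    (Submodule.subtype _)

lemma deltaH_mk (z : ((G ⧸ lowerP p G (n+1)) × (G ⧸ lowerP p G (n+1)) →₀ ZMod p))
    (h : Submodule.mkQ (LinearMap.range (barD3 p _)) z ∈
      Submodule.map (Submodule.mkQ (LinearMap.range (barD3 p _)))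
        (LinearMap.ker (barD2 p (G ⧸ lowerP p G (n+1))))) :
    deltaH p G n ⟨Submodule.mkQ _ z, h⟩ = deltaC p G n z := by
  simp [deltaH]

/-- image of `H₂(G)` lies in the kernel of `δ` -/
lemma deltaH_H2Map_pi (y : groupH2 p G) :
    deltaH p G n (groupH2Map p (pi p G n) y) = 0 := by
  obtain ⟨val, w, hw, rfl⟩ := y
  have hval : (groupH2Map p (pi p G n) ⟨Submodule.mkQ _ w, ⟨w, hw, rfl⟩⟩).1
      = Submodule.mkQ _ (Finsupp.lmapDomain (ZMod p) (ZMod p)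
          (Prod.map (pi p G n) (pi p G n)) w) := by
    show barQ2Map p (pi p G n) (Submodule.mkQ _ w) = _
    rw [Submodule.mkQ_apply, Submodule.mkQ_apply, barQ2Map, Submodule.mapQ_apply]
  have : deltaH p G n (groupH2Map p (pi p G n) ⟨Submodule.mkQ _ w, ⟨w, hw, rfl⟩⟩)
      = deltaC p G n (Finsupp.lmapDomain (ZMod p) (ZMod p)
          (Prod.map (pi p G n) (pi p G n)) w) := by
    rw [deltaH, LinearMap.comp_apply, Submodule.subtype_apply, hval, Submodule.mkQ_apply,
      Submodule.liftQ_apply]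
  rw [this]
  have h2 := congrFun (congrArg DFunLike.coe (deltaC_comp_piMap p G n)) w
  simp only [LinearMap.coe_comp, Function.comp_apply, LinearMap.neg_apply] at h2
  rw [h2, LinearMap.mem_ker.mp hw, map_zero, neg_zero]
lemma nsmul_p_eq_zero (x : Additive ↥(Msub p G n)) : p • x = 0 := by
  rw [← ofMul_toMul x, ← ofMul_pow, Msub_pow_eq_one]
  simp

lemma smul_p_cast_eq_zero {V : Type*} [AddCommGroup V] [Module (ZMod p) V] (x : V) :
    p • x = 0 := by
  rw [← Nat.cast_smul_eq_nsmul (ZMod p) p x, ZMod.natCast_self, zero_smul]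

/-- `δ`-chain surjectivity data for each element of `G_{p,n+1}` (for `n ≥ 1`). -/
lemma deltaC_surj_aux (hp : 1 ≤ p) (hn : 1 ≤ n) :
    ∀ ν ∈ lowerP p G (n+1),
      ∃ z : ((G ⧸ lowerP p G (n+1)) × (G ⧸ lowerP p G (n+1)) →₀ ZMod p),
        barD2 p _ z = 0 ∧
          ((Additive.toMul (deltaC p G n z) : ↥(Msub p G n)) : G ⧸ lowerP p G (n+2))
            = XX p G n ν := by
  obtain ⟨j, rfl⟩ : ∃ j, n = j + 1 := ⟨n - 1, (Nat.succ_pred_eq_of_pos hn).symm⟩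
  intro ν hν
  have hν' : ν ∈ Subgroup.closure
      ({x | ∃ a ∈ lowerP p G (j + 1), x = a ^ p} ∪
       {x | ∃ a ∈ lowerP p G (j + 1), ∃ b : G, x = ⁅a, b⁆}) := hν
  clear hν
  induction hν' using Subgroup.closure_induction with
  | one => exact ⟨0, by simp, by simp⟩
  | mul x y hx hy ihx ihy =>
    obtain ⟨z₁, hz₁, hd₁⟩ := ihx
    obtain ⟨z₂, hz₂, hd₂⟩ := ihy
    refine ⟨z₁ + z₂, by rw [map_add, hz₁, hz₂, add_zero], ?_⟩
    rw [map_add, toMul_add, Subgroup.coe_mul, hd₁, hd₂, map_mul]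
  | inv x hx ihx =>
    obtain ⟨z₁, hz₁, hd₁⟩ := ihx
    refine ⟨-z₁, by rw [map_neg, hz₁, neg_zero], ?_⟩
    rw [map_neg, toMul_neg, Subgroup.coe_inv, hd₁, map_inv]
  | mem x hx =>
    rcases hx with ⟨a, ha, rfl⟩ | ⟨a, ha, b, rfl⟩
    · -- the p-th power generator
      have hapow : a ^ p ∈ lowerP p G (j+1+1) := pow_mem_lowerP p ha
      set qa := pi p G (j+1) a with hqa
      have hpia : ∀ k : ℕ, pi p G (j+1) (a ^ k) = qa ^ k := fun k => map_pow _ _ _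
      have hqa_pow : qa ^ p = 1 := by
        rw [← hpia p]
        exact (QuotientGroup.eq_one_iff _).mpr hapow
      refine ⟨(Finset.range (p-1)).sum
          (fun i => single (qa^(i+1), qa) (1:ZMod p)) + single (1,1) 1, ?_, ?_⟩
      · rw [map_add, map_sum]
        have key : ∀ m : ℕ, ∑ i ∈ Finset.range m,
              barD2 p (G ⧸ lowerP p G (j+1+1)) (single (qa^(i+1), qa) (1:ZMod p))
            = m • single qa (1:ZMod p)
              + (single (qa^1) (1:ZMod p) - single (qa^(m+1)) (1:ZMod p)) := by
          intro m
          induction m with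
          | zero => simp
          | succ k ih =>
            rw [Finset.sum_range_succ, ih]
            simp only [barD2_single, one_smul, succ_nsmul, ← pow_succ]
            abel
        rw [key (p-1), Nat.sub_add_cancel hp, hqa_pow, pow_one]
        simp only [barD2_single, one_smul, one_mul]
        have hc : (p-1) • single qa (1:ZMod p)
              + (single qa (1:ZMod p) - single (1 : G ⧸ lowerP p G (j+1+1)) (1:ZMod p))
              + (single (1 : G ⧸ lowerP p G (j+1+1)) (1:ZMod p)
                  - single (1 : G ⧸ lowerP p G (j+1+1)) (1:ZMod p)
                  + single (1 : G ⧸ lowerP p G (j+1+1)) (1:ZMod p))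
            = (p-1) • single qa (1:ZMod p) + single qa (1:ZMod p) := by abel
        rw [hc, ← succ_nsmul, Nat.sub_add_cancel hp]
        exact smul_p_cast_eq_zero p _
      · rw [map_add, map_sum]
        have key2 : ∀ m : ℕ, ∑ i ∈ Finset.range m,
              deltaC p G (j+1) (single (qa^(i+1), qa) (1:ZMod p))
            = Additive.ofMul (Em p G (j+1) (a^(m+1)))
              - Additive.ofMul (Em p G (j+1) (a^1))
              - m • Additive.ofMul (Em p G (j+1) a) := by
          intro m
          induction m with
          | zero => simp
          | succ k ih =>
            rw [Finset.sum_range_succ, ih]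
            simp only [deltaC_single, one_smul]
            rw [← hpia (k+1)]
            rw [show qa = pi p G (j+1) a from hqa, Fm_pi_pi, ← pow_succ]
            simp only [ofMul_mul, ofMul_inv, succ_nsmul]
            abel
        rw [key2 (p-1), Nat.sub_add_cancel hp, pow_one]
        simp only [deltaC_single, one_smul]
        have hz2 : Additive.ofMul (Em p G (j+1) a)
            + (p-1) • Additive.ofMul (Em p G (j+1) a) = 0 := by
          rw [← succ_nsmul', Nat.sub_add_cancel hp]
          exact nsmul_p_eq_zero p G (j+1) _
        have hsum : Additive.ofMul (Em p G (j+1) (a^p)) - Additive.ofMul (Em p G (j+1) a)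
              - (p-1) • Additive.ofMul (Em p G (j+1) a)
              + Additive.ofMul (Fm p G (j+1) 1 1)
            = Additive.ofMul (Em p G (j+1) (a^p)) + Additive.ofMul (Fm p G (j+1) 1 1) := by
          calc Additive.ofMul (Em p G (j+1) (a^p)) - Additive.ofMul (Em p G (j+1) a)
              - (p-1) • Additive.ofMul (Em p G (j+1) a)
              + Additive.ofMul (Fm p G (j+1) 1 1)
              = Additive.ofMul (Em p G (j+1) (a^p)) + Additive.ofMul (Fm p G (j+1) 1 1)
                - (Additive.ofMul (Em p G (j+1) a)
                    + (p-1) • Additive.ofMul (Em p G (j+1) a)) := by abel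
            _ = _ := by rw [hz2, sub_zero]
        rw [hsum, toMul_add, toMul_ofMul, toMul_ofMul, Subgroup.coe_mul]
        show XX p G (j+1) (eg p G (j+1) (a^p)) * XX p G (j+1) (fQ p G (j+1) 1 1) = _
        have h1 : fQ p G (j+1) 1 1 = Quotient.out (1 : G ⧸ lowerP p G (j+1+1)) := by
          rw [fQ, one_mul]
          exact mul_inv_cancel_right _ _
        have h2 : eg p G (j+1) (a^p)
            = (Quotient.out (1 : G ⧸ lowerP p G (j+1+1)))⁻¹ * a^p := by
          rw [eg, hpia p, hqa_pow]
        rw [h1, h2, ← map_mul]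
        have h3 : (Quotient.out (1 : G ⧸ lowerP p G (j+1+1)))⁻¹ * a ^ p
              * Quotient.out (1 : G ⧸ lowerP p G (j+1+1))
            = (Quotient.out (1 : G ⧸ lowerP p G (j+1+1)))⁻¹ * a ^ p
              * ((Quotient.out (1 : G ⧸ lowerP p G (j+1+1)))⁻¹)⁻¹ := by rw [inv_inv]
        rw [h3, XX_conj p hapow]
    · -- the commutator generator
      have hmem : ⁅a, b⁆ ∈ lowerP p G (j+1+1) := commutator_mem_lowerP p ha b
      have hcommQ : pi p G (j+1) a * pi p G (j+1) b = pi p G (j+1) b * pi p G (j+1) a := by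
        have h1 : ⁅pi p G (j+1) a, pi p G (j+1) b⁆ = 1 := by
          rw [← map_commutatorElement]
          exact (QuotientGroup.eq_one_iff _).mpr hmem
        exact (commutatorElement_eq_one_iff_commute.mp h1).eq
      refine ⟨single (pi p G (j+1) a, pi p G (j+1) b) 1
          - single (pi p G (j+1) b, pi p G (j+1) a) 1, ?_, ?_⟩
      · rw [map_sub]
        simp only [barD2_single, one_smul]
        rw [hcommQ]
        abel
      · have hpiab : pi p G (j+1) (a*b) = pi p G (j+1) (b*a) := by
          rw [map_mul, map_mul, hcommQ]
        have hd : deltaC p G (j+1) (single (pi p G (j+1) a, pi p G (j+1) b) 1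
              - single (pi p G (j+1) b, pi p G (j+1) a) 1)
            = Additive.ofMul (Em p G (j+1) (a*b)) - Additive.ofMul (Em p G (j+1) (b*a)) := by
          rw [map_sub]
          simp only [deltaC_single, one_smul]
          rw [Fm_pi_pi, Fm_pi_pi]
          simp only [ofMul_mul, ofMul_inv]
          abel
        rw [hd,
          show Additive.ofMul (Em p G (j+1) (a*b)) - Additive.ofMul (Em p G (j+1) (b*a))
            = Additive.ofMul (Em p G (j+1) (a*b) * (Em p G (j+1) (b*a))⁻¹) from by
              rw [ofMul_mul, ofMul_inv, sub_eq_add_neg],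
          toMul_ofMul, Subgroup.coe_mul, Subgroup.coe_inv]
        show XX p G (j+1) (eg p G (j+1) (a*b)) * (XX p G (j+1) (eg p G (j+1) (b*a)))⁻¹ = _
        rw [← map_inv, ← map_mul]
        have hkey : eg p G (j+1) (a*b) * (eg p G (j+1) (b*a))⁻¹
            = (Quotient.out (pi p G (j+1) (b*a)))⁻¹ * ⁅a, b⁆
              * ((Quotient.out (pi p G (j+1) (b*a)))⁻¹)⁻¹ := by
          rw [eg, eg, hpiab, commutatorElement_def]
          group
        rw [hkey, XX_conj p hmem]

/-- `δ` is surjective at the `H₂` level (for `n ≥ 1`). -/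
lemma deltaH_surjective (hp : 1 ≤ p) (hn : 1 ≤ n) (x : ↥(Msub p G n)) :
    ∃ ξ : groupH2 p (G ⧸ lowerP p G (n+1)), deltaH p G n ξ = Additive.ofMul x := by
  obtain ⟨xv, hxm⟩ := x
  obtain ⟨ν, hν, hxv⟩ := hxm
  obtain ⟨z, hz, hd⟩ := deltaC_surj_aux p G n hp hn ν hν
  refine ⟨⟨Submodule.mkQ _ z, z, LinearMap.mem_ker.mpr hz, rfl⟩, ?_⟩
  rw [deltaH_mk p G n z (Submodule.mem_map.mpr ⟨z, LinearMap.mem_ker.mpr hz, rfl⟩), ← ofMul_toMul (deltaC p G n z)]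
  exact congrArg Additive.ofMul (Subtype.ext (by rw [hd]; exact hxv))
/-- `∂∘∂ = 0` -/
lemma barD2_comp_barD3 (H : Type*) [Group H] :
    (barD2 p H).comp (barD3 p H) = 0 := by
  apply Finsupp.lhom_ext
  rintro ⟨g, h, j⟩ b
  simp only [LinearMap.coe_comp, Function.comp_apply, barD3_single, map_smul, map_sub, map_add,
    barD2_single, LinearMap.zero_apply, one_smul, mul_assoc]
  rw [← smul_zero b]
  congr 1
  abel

/-- the degenerate-chains submodule `D` -/
noncomputable def Dsub : Submodule (ZMod p)
    (((G ⧸ lowerP p G (n+1)) × (G ⧸ lowerP p G (n+1))) →₀ ZMod p) :=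
  LinearMap.range (barD3 p (G ⧸ lowerP p G (n+1)))
    ⊔ Submodule.span (ZMod p) {single (1,1) 1}

lemma single_one_one_mem_Dsub : single ((1:G ⧸ lowerP p G (n+1)), (1:G ⧸ lowerP p G (n+1)))
    (1:ZMod p) ∈ Dsub p G n :=
  Submodule.mem_sup_right (Submodule.mem_span_singleton_self _)

lemma single_one_mem_Dsub (x : G ⧸ lowerP p G (n+1)) :
    single ((1:G ⧸ lowerP p G (n+1)), x) (1:ZMod p) ∈ Dsub p G n := by
  have h : barD3 p (G ⧸ lowerP p G (n+1)) (single (1, 1, x) (1:ZMod p))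
      = single (1, x) 1 - single (1, 1) 1 := by
    rw [barD3_single, one_smul, one_mul, one_mul]
    abel
  have h2 : single ((1:G ⧸ lowerP p G (n+1)), x) (1:ZMod p)
      = barD3 p (G ⧸ lowerP p G (n+1)) (single (1, 1, x) (1:ZMod p)) + single (1, 1) 1 := by
    rw [h, sub_add_cancel]
  rw [h2]
  exact add_mem (Submodule.mem_sup_left (LinearMap.mem_range.mpr ⟨_, rfl⟩))
    (single_one_one_mem_Dsub p G n)

/-- inclusion of `N`-supported chains into `G`-chains -/
noncomputable def jmapN : ((↥(lowerP p G (n+1))) →₀ ZMod p) →ₗ[ZMod p] (G →₀ ZMod p) :=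
  Finsupp.lmapDomain (ZMod p) (ZMod p) Subtype.val

/-- the class of an element of `N` in `Msub` -/
noncomputable def MmN (ν : ↥(lowerP p G (n+1))) : ↥(Msub p G n) :=
  ⟨XX p G n (ν : G), Subgroup.mem_map_of_mem _ ν.2⟩

lemma MmN_mul (ν μ : ↥(lowerP p G (n+1))) :
    MmN p G n (ν * μ) = MmN p G n ν * MmN p G n μ := by
  apply Subtype.ext
  exact map_mul _ _ _

lemma MmN_one : MmN p G n 1 = 1 := by
  apply Subtype.ext
  exact map_one _

lemma MmN_pow (ν : ↥(lowerP p G (n+1))) (k : ℕ) :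
    MmN p G n (ν ^ k) = (MmN p G n ν) ^ k := by
  apply Subtype.ext
  show XX p G n ((ν:G) ^ k) = _
  rw [map_pow]
  rfl

/-- evaluation of `N`-supported chains in `Msub` -/
noncomputable def epsN : ((↥(lowerP p G (n+1))) →₀ ZMod p) →ₗ[ZMod p] Additive ↥(Msub p G n) :=
  Finsupp.lift _ (ZMod p) _ fun ν => Additive.ofMul (MmN p G n ν)

lemma epsN_single (ν : ↥(lowerP p G (n+1))) (b : ZMod p) :
    epsN p G n (single ν b) = b • Additive.ofMul (MmN p G n ν) := by
  simp [epsN, Finsupp.lift_apply, Finsupp.sum_single_index]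

/-- the submodule of `N`-chains that bound compatibly -/
noncomputable def Vsub : Submodule (ZMod p) ((↥(lowerP p G (n+1))) →₀ ZMod p) where
  carrier := {c | ∃ u : (G × G) →₀ ZMod p, barD2 p G u = jmapN p G n c ∧
      Finsupp.lmapDomain (ZMod p) (ZMod p) (Prod.map (pi p G n) (pi p G n)) u ∈ Dsub p G n}
  add_mem' := by
    rintro c₁ c₂ ⟨u₁, h₁, h₁'⟩ ⟨u₂, h₂, h₂'⟩
    exact ⟨u₁ + u₂, by rw [map_add, map_add, h₁, h₂], by rw [map_add]; exact add_mem h₁' h₂'⟩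
  zero_mem' := ⟨0, by simp, by rw [map_zero]; exact zero_mem _⟩
  smul_mem' := by
    rintro b c ⟨u, h, h'⟩
    exact ⟨b • u, by rw [map_smul, map_smul, h], by rw [map_smul]; exact Submodule.smul_mem _ _ h'⟩

lemma rel_one_mem : single (1 : ↥(lowerP p G (n+1))) (1:ZMod p) ∈ Vsub p G n := by
  refine ⟨single ((1:G), (1:G)) 1, ?_, ?_⟩
  · rw [barD2_single, one_smul, one_mul, jmapN, lmap_single]
    show _ = single (((1 : ↥(lowerP p G (n+1))) : G)) (1:ZMod p)
    rw [Subgroup.coe_one]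
    abel
  · rw [lmap_single]
    simpa using single_one_one_mem_Dsub p G n

lemma rel_mul_mem (ν μ : ↥(lowerP p G (n+1))) :
    single ν (1:ZMod p) + single μ 1 - single (ν * μ) 1 ∈ Vsub p G n := by
  refine ⟨single ((ν:G), (μ:G)) 1, ?_, ?_⟩
  · rw [barD2_single, one_smul, jmapN]
    rw [map_sub, map_add, lmap_single, lmap_single, lmap_single]
    show _ = single ((ν:G)) (1:ZMod p) + single ((μ:G)) 1 - single (((ν * μ : _) : G)) 1
    rw [Subgroup.coe_mul]
    abel
  · rw [lmap_single]
    have h1 : pi p G n (ν : G) = 1 := (QuotientGroup.eq_one_iff _).mpr ν.2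
    have h2 : pi p G n (μ : G) = 1 := (QuotientGroup.eq_one_iff _).mpr μ.2
    show single (pi p G n (ν:G), pi p G n (μ:G)) 1 ∈ _
    rw [h1, h2]
    exact single_one_one_mem_Dsub p G n

lemma single_mul_mem {ν μ : ↥(lowerP p G (n+1))}
    (hν : single ν (1:ZMod p) ∈ Vsub p G n) (hμ : single μ (1:ZMod p) ∈ Vsub p G n) :
    single (ν * μ) (1:ZMod p) ∈ Vsub p G n := by
  have h := sub_mem (add_mem hν hμ) (rel_mul_mem p G n ν μ)
  simpa using h

lemma single_inv_mem {ν : ↥(lowerP p G (n+1))}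
    (hν : single ν (1:ZMod p) ∈ Vsub p G n) :
    single ν⁻¹ (1:ZMod p) ∈ Vsub p G n := by
  have h1 : single (ν * ν⁻¹) (1:ZMod p) ∈ Vsub p G n := by
    rw [mul_inv_cancel]; exact rel_one_mem p G n
  have h := sub_mem (add_mem (rel_mul_mem p G n ν ν⁻¹) h1) hν
  rw [show single ν (1:ZMod p) + single ν⁻¹ 1 - single (ν * ν⁻¹) 1
      + single (ν * ν⁻¹) (1:ZMod p) - single ν 1 = single ν⁻¹ 1 from by abel] at h
  exact h

lemma pow_single_mem (a : ↥(lowerP p G (n+1))) (k : ℕ) :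
    k • single a (1:ZMod p) - single (a^k) 1 ∈ Vsub p G n := by
  induction k with
  | zero =>
    rw [zero_smul, zero_sub, pow_zero]
    exact neg_mem (rel_one_mem p G n)
  | succ m ih =>
    have h := add_mem ih (rel_mul_mem p G n (a^m) a)
    rw [show m • single a (1:ZMod p) - single (a^m) 1
        + (single (a^m) (1:ZMod p) + single a 1 - single (a^m * a) 1)
      = (m+1) • single a (1:ZMod p) - single (a^m * a) 1 from by rw [succ_nsmul]; abel,
      ← pow_succ] at h
    exact h
lemma singleN'_mem_aux (hp : 1 ≤ p) {x : G} (hx : x ∈ lowerP p G (n+2)) :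
    ∀ hxN : x ∈ lowerP p G (n+1),
      single (⟨x, hxN⟩ : ↥(lowerP p G (n+1))) (1:ZMod p) ∈ Vsub p G n := by
  have hx' : x ∈ Subgroup.closure
      ({y | ∃ a ∈ lowerP p G (n+1), y = a ^ p} ∪
       {y | ∃ a ∈ lowerP p G (n+1), ∃ b : G, y = ⁅a, b⁆}) := hx
  clear hx
  induction hx' using Subgroup.closure_induction with
  | one => intro h1; exact rel_one_mem p G n
  | mul x y hx hy ihx ihy =>
    intro hxy
    exact single_mul_mem p G n (ihx (lowerP_succ_le p (n+1) hx))
      (ihy (lowerP_succ_le p (n+1) hy))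
  | inv x hx ihx =>
    intro hxi
    exact single_inv_mem p G n (ihx (lowerP_succ_le p (n+1) hx))
  | mem x hgen =>
    intro hxN
    rcases hgen with ⟨a, ha, rfl⟩ | ⟨a, ha, b, rfl⟩
    · -- a^p
      refine ⟨-((Finset.range (p-1)).sum (fun i => single ((a^(i+1) : G), a) (1:ZMod p))),
        ?_, ?_⟩
      · rw [map_neg, map_sum]
        have key : ∀ m : ℕ, ∑ i ∈ Finset.range m, barD2 p G (single (a^(i+1), a) (1:ZMod p))
            = m • single a (1:ZMod p)
              + (single (a^1) (1:ZMod p) - single (a^(m+1)) (1:ZMod p)) := by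
          intro m
          induction m with
          | zero => simp
          | succ k ih =>
            rw [Finset.sum_range_succ, ih]
            simp only [barD2_single, one_smul, succ_nsmul, ← pow_succ]
            abel
        rw [key (p-1), Nat.sub_add_cancel hp, pow_one, jmapN, lmap_single]
        show _ = single ((⟨a^p, hxN⟩ : ↥(lowerP p G (n+1))) : G) (1:ZMod p)
        show _ = single (a^p) (1:ZMod p)
        rw [show -((p-1) • single a (1:ZMod p) + (single a (1:ZMod p) - single (a^p) 1))
            = single (a^p) (1:ZMod p) - ((p-1) • single a (1:ZMod p) + single a 1) from by abel,
          ← succ_nsmul, Nat.sub_add_cancel hp, smul_p_cast_eq_zero, sub_zero]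
      · rw [map_neg, map_sum]
        have hpa : pi p G n a = 1 := (QuotientGroup.eq_one_iff _).mpr ha
        have hmap : ∀ i ∈ Finset.range (p-1),
            Finsupp.lmapDomain (ZMod p) (ZMod p) (Prod.map (pi p G n) (pi p G n))
              (single ((a^(i+1) : G), a) (1:ZMod p))
            = single ((1 : G ⧸ lowerP p G (n+1)), (1 : G ⧸ lowerP p G (n+1))) (1:ZMod p) := by
          intro i _
          rw [lmap_single]
          show single (pi p G n (a^(i+1)), pi p G n a) (1:ZMod p) = _
          rw [map_pow, hpa, one_pow]
        rw [Finset.sum_congr rfl hmap, Finset.sum_const, Finset.card_range]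
        exact neg_mem (nsmul_mem (single_one_one_mem_Dsub p G n) _)
    · -- commutator
      refine ⟨single ((a:G), a⁻¹) 1 + single (b, b⁻¹) 1
          + single ((1:G), (1:G)) 1 + single ((1:G), (1:G)) 1
          - single (a, b*(a⁻¹*b⁻¹)) 1 - single (b, a⁻¹*b⁻¹) 1 - single (a⁻¹, b⁻¹) 1, ?_, ?_⟩
      · rw [jmapN, lmap_single]
        show _ = single ((⟨⁅a,b⁆, hxN⟩ : ↥(lowerP p G (n+1))) : G) (1:ZMod p)
        show _ = single (⁅a,b⁆) (1:ZMod p)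
        simp only [map_add, map_sub, barD2_single, one_smul, commutatorElement_def,
          mul_assoc, mul_inv_cancel, one_mul, inv_mul_cancel, mul_one]
        abel
      · have hpa : pi p G n a = 1 := (QuotientGroup.eq_one_iff _).mpr ha
        have hmap : Finsupp.lmapDomain (ZMod p) (ZMod p) (Prod.map (pi p G n) (pi p G n))
              (single ((a:G), a⁻¹) 1 + single (b, b⁻¹) 1
                + single ((1:G), (1:G)) 1 + single ((1:G), (1:G)) 1
                - single (a, b*(a⁻¹*b⁻¹)) 1 - single (b, a⁻¹*b⁻¹) 1 - single (a⁻¹, b⁻¹) 1)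
            = single ((1 : G ⧸ lowerP p G (n+1)), (1 : G ⧸ lowerP p G (n+1))) (1:ZMod p)
              + single (1, 1) 1
              - single ((1 : G ⧸ lowerP p G (n+1)), (pi p G n b)⁻¹) 1 := by
          simp only [map_add, map_sub, lmap_single, Prod.map_apply, map_mul, map_inv, map_one,
            hpa, inv_one, one_mul, mul_inv_cancel, mul_one]
          abel
        rw [hmap]
        exact sub_mem (add_mem (single_one_one_mem_Dsub p G n) (single_one_one_mem_Dsub p G n))
          (single_one_mem_Dsub p G n _)

lemma singleN'_mem (hp : 1 ≤ p) (ν : ↥(lowerP p G (n+1))) (hν : (ν:G) ∈ lowerP p G (n+2)) :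
    single ν (1:ZMod p) ∈ Vsub p G n :=
  singleN'_mem_aux p G n hp hν ν.2

lemma zmod_smul_val {V : Type*} [AddCommGroup V] [Module (ZMod p) V] [NeZero p]
    (b : ZMod p) (x : V) : b • x = b.val • x := by
  rw [← Nat.cast_smul_eq_nsmul (ZMod p) b.val x, ZMod.natCast_val, ZMod.cast_id]

lemma epsN_pres (hp : 1 ≤ p) (c : (↥(lowerP p G (n+1))) →₀ ZMod p) :
    ∃ ν : ↥(lowerP p G (n+1)), c - single ν 1 ∈ Vsub p G n
      ∧ epsN p G n c = Additive.ofMul (MmN p G n ν) := by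
  haveI : NeZero p := ⟨Nat.one_le_iff_ne_zero.mp hp⟩
  induction c using Finsupp.induction with
  | zero =>
    refine ⟨1, by rw [zero_sub]; exact neg_mem (rel_one_mem p G n), ?_⟩
    rw [map_zero, MmN_one]
    simp
  | single_add a b f hf hb ih =>
    obtain ⟨ν₀, hV, hE⟩ := ih
    refine ⟨a ^ b.val * ν₀, ?_, ?_⟩
    · have hsb : single a b = b.val • single a (1:ZMod p) := by
        rw [← zmod_smul_val p, Finsupp.smul_single, smul_eq_mul, mul_one]
      have h := add_mem (add_mem (pow_single_mem p G n a b.val)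
        (rel_mul_mem p G n (a ^ b.val) ν₀)) hV
      rw [show b.val • single a (1:ZMod p) - single (a ^ b.val) 1
          + (single (a ^ b.val) (1:ZMod p) + single ν₀ 1 - single (a ^ b.val * ν₀) 1)
          + (f - single ν₀ 1)
        = (b.val • single a (1:ZMod p) + f) - single (a ^ b.val * ν₀) 1 from by abel] at h
      rw [hsb]
      exact h
    · rw [map_add, epsN_single, hE, MmN_mul, MmN_pow, ofMul_mul, ofMul_pow,
        zmod_smul_val p]
/-- lift of 2-chains along the section, with cocycle corrections -/
noncomputable def S2map :
    (((G ⧸ lowerP p G (n+1)) × (G ⧸ lowerP p G (n+1))) →₀ ZMod p) →ₗ[ZMod p]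
      ((G × G) →₀ ZMod p) :=
  Finsupp.lmapDomain (ZMod p) (ZMod p)
    (fun x : (G ⧸ lowerP p G (n+1)) × (G ⧸ lowerP p G (n+1)) =>
      (Quotient.out x.1, Quotient.out x.2))

noncomputable def Tmap :
    (((G ⧸ lowerP p G (n+1)) × (G ⧸ lowerP p G (n+1))) →₀ ZMod p) →ₗ[ZMod p]
      ((G × G) →₀ ZMod p) :=
  Finsupp.lift _ (ZMod p) _ fun x =>
    single (fQ p G n x.1 x.2, Quotient.out (x.1 * x.2)) 1

noncomputable def Lmmap :
    (((G ⧸ lowerP p G (n+1)) × (G ⧸ lowerP p G (n+1))) →₀ ZMod p) →ₗ[ZMod p]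
      ((↥(lowerP p G (n+1))) →₀ ZMod p) :=
  Finsupp.lift _ (ZMod p) _ fun x =>
    single (⟨fQ p G n x.1 x.2, fQ_mem p G n x.1 x.2⟩ : ↥(lowerP p G (n+1))) 1

lemma Tmap_single (x : (G ⧸ lowerP p G (n+1)) × (G ⧸ lowerP p G (n+1))) (b : ZMod p) :
    Tmap p G n (single x b) = b • single (fQ p G n x.1 x.2, Quotient.out (x.1 * x.2)) 1 := by
  simp [Tmap, Finsupp.lift_apply, Finsupp.sum_single_index]

lemma Lmmap_single (x : (G ⧸ lowerP p G (n+1)) × (G ⧸ lowerP p G (n+1))) (b : ZMod p) :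
    Lmmap p G n (single x b)
      = b • single (⟨fQ p G n x.1 x.2, fQ_mem p G n x.1 x.2⟩ : ↥(lowerP p G (n+1))) 1 := by
  simp [Lmmap, Finsupp.lift_apply, Finsupp.sum_single_index]

lemma pi_out (q : G ⧸ lowerP p G (n+1)) : pi p G n (Quotient.out q) = q :=
  QuotientGroup.out_eq' q

lemma epsN_comp_Lmmap :
    (epsN p G n).comp (Lmmap p G n) = deltaC p G n := by
  apply Finsupp.lhom_ext
  rintro ⟨q, r⟩ b
  simp only [LinearMap.coe_comp, Function.comp_apply, Lmmap_single, map_smul, epsN_single,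
    deltaC_single, one_smul]
  rfl

lemma barD2_S2_sub_T :
    (barD2 p G).comp ((S2map p G n) - (Tmap p G n))
      = (Finsupp.lmapDomain (ZMod p) (ZMod p) (fun q : G ⧸ lowerP p G (n+1) => Quotient.out q)).comp
          (barD2 p (G ⧸ lowerP p G (n+1)))
        - (jmapN p G n).comp (Lmmap p G n) := by
  apply Finsupp.lhom_ext
  rintro ⟨q, r⟩ b
  have hfs : fQ p G n q r * Quotient.out (q * r) = Quotient.out q * Quotient.out r := by
    rw [fQ]; group
  simp only [LinearMap.coe_comp, LinearMap.sub_apply, Function.comp_apply, S2map, lmap_single,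
    Tmap_single, Lmmap_single, jmapN, map_smul, map_sub, map_add, barD2_single, one_smul]
  rw [hfs]
  show b • (single (Quotient.out r) (1:ZMod p) - single (Quotient.out q * Quotient.out r) 1
      + single (Quotient.out q) 1)
      - b • (single (Quotient.out (q*r)) (1:ZMod p)
          - single (Quotient.out q * Quotient.out r) 1 + single (fQ p G n q r) 1)
    = b • (single (Quotient.out r) (1:ZMod p) - single (Quotient.out (q*r)) 1
        + single (Quotient.out q) 1)
      - b • (single (fQ p G n q r) (1:ZMod p))
  rw [← smul_sub b, ← smul_sub b]
  exact congrArg (fun t => b • t) (by abel)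

lemma piMap2_S2 :
    (Finsupp.lmapDomain (ZMod p) (ZMod p) (Prod.map (pi p G n) (pi p G n))).comp (S2map p G n)
      = LinearMap.id := by
  apply Finsupp.lhom_ext
  rintro ⟨q, r⟩ b
  simp only [LinearMap.coe_comp, Function.comp_apply, S2map, lmap_single, LinearMap.id_apply]
  show single (pi p G n (Quotient.out q), pi p G n (Quotient.out r)) b = _
  rw [pi_out, pi_out]

lemma piMap2_T_mem_Dsub (z : ((G ⧸ lowerP p G (n+1)) × (G ⧸ lowerP p G (n+1))) →₀ ZMod p) :
    Finsupp.lmapDomain (ZMod p) (ZMod p) (Prod.map (pi p G n) (pi p G n)) (Tmap p G n z)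
      ∈ Dsub p G n := by
  induction z using Finsupp.induction with
  | zero => rw [map_zero, map_zero]; exact zero_mem _
  | single_add x b f hx hb ih =>
    rw [map_add, map_add]
    refine add_mem ?_ ih
    rw [Tmap_single, map_smul, lmap_single]
    refine Submodule.smul_mem _ _ ?_
    have hf1 : pi p G n (fQ p G n x.1 x.2) = 1 :=
      (QuotientGroup.eq_one_iff _).mpr (fQ_mem p G n x.1 x.2)
    show single (pi p G n (fQ p G n x.1 x.2), pi p G n (Quotient.out (x.1 * x.2))) (1:ZMod p) ∈ _
    rw [pi_out, hf1]
    exact single_one_mem_Dsub p G n _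

/-- K3 : chains in the kernel of `δ` lift to cycles of `G` up to boundaries -/
lemma exact_aux (hp : 1 ≤ p)
    (z : ((G ⧸ lowerP p G (n+1)) × (G ⧸ lowerP p G (n+1))) →₀ ZMod p)
    (hz : barD2 p _ z = 0) (hd : deltaC p G n z = 0) :
    ∃ w : (G × G) →₀ ZMod p, barD2 p G w = 0 ∧
      Finsupp.lmapDomain (ZMod p) (ZMod p) (Prod.map (pi p G n) (pi p G n)) w - z
        ∈ LinearMap.range (barD3 p (G ⧸ lowerP p G (n+1))) := by
  -- the fundamental correction
  have hLmeps : epsN p G n (Lmmap p G n z) = 0 := by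
    have h := congrFun (congrArg DFunLike.coe (epsN_comp_Lmmap p G n)) z
    simp only [LinearMap.coe_comp, Function.comp_apply] at h
    rw [h, hd]
  obtain ⟨ν₀, hV, hE⟩ := epsN_pres p G n hp (Lmmap p G n z)
  have hν₀ : (ν₀ : G) ∈ lowerP p G (n+2) := by
    have h1 : Additive.ofMul (MmN p G n ν₀) = 0 := by rw [← hE, hLmeps]
    have h2 : MmN p G n ν₀ = 1 := by
      have := congrArg Additive.toMul h1
      simpa using this
    have h3 : XX p G n (ν₀ : G) = 1 := congrArg Subtype.val h2
    exact (QuotientGroup.eq_one_iff _).mp h3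
  have hLmV : Lmmap p G n z ∈ Vsub p G n := by
    have h := add_mem hV (singleN'_mem p G n hp ν₀ hν₀)
    rwa [sub_add_cancel] at h
  obtain ⟨u, hu1, hu2⟩ := hLmV
  refine ⟨S2map p G n z - Tmap p G n z + u, ?_, ?_⟩
  · have h1 := congrFun (congrArg DFunLike.coe (barD2_S2_sub_T p G n)) z
    simp only [LinearMap.coe_comp, LinearMap.sub_apply, Function.comp_apply] at h1
    rw [map_add, h1, hz, map_zero, zero_sub, hu1, neg_add_cancel]
  · have h5 : Finsupp.lmapDomain (ZMod p) (ZMod p) (Prod.map (pi p G n) (pi p G n))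
        (S2map p G n z) = z := by
      have h := congrFun (congrArg DFunLike.coe (piMap2_S2 p G n)) z
      simpa using h
    have h6 : Finsupp.lmapDomain (ZMod p) (ZMod p) (Prod.map (pi p G n) (pi p G n))
          (S2map p G n z - Tmap p G n z + u) - z
        = Finsupp.lmapDomain (ZMod p) (ZMod p) (Prod.map (pi p G n) (pi p G n)) u
          - Finsupp.lmapDomain (ZMod p) (ZMod p) (Prod.map (pi p G n) (pi p G n))
              (Tmap p G n z) := by
      rw [map_add, map_sub, h5]
      abel
    have h7 : Finsupp.lmapDomain (ZMod p) (ZMod p) (Prod.map (pi p G n) (pi p G n))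
          (S2map p G n z - Tmap p G n z + u) - z ∈ Dsub p G n := by
      rw [h6]
      exact sub_mem hu2 (piMap2_T_mem_Dsub p G n z)
    rw [Dsub] at h7
    obtain ⟨d, hdD, e, heD, hde⟩ := Submodule.mem_sup.mp h7
    obtain ⟨k, rfl⟩ := Submodule.mem_span_singleton.mp heD
    -- the `[1|1]` coefficient must vanish
    have hw2 : barD2 p (G ⧸ lowerP p G (n+1))
        (Finsupp.lmapDomain (ZMod p) (ZMod p) (Prod.map (pi p G n) (pi p G n))
          (S2map p G n z - Tmap p G n z + u)) = 0 := by
      have hcomm := congrFun (congrArg DFunLike.coe (barD2_comm p (pi p G n)))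
        (S2map p G n z - Tmap p G n z + u)
      simp only [LinearMap.coe_comp, Function.comp_apply] at hcomm
      rw [hcomm]
      have h1 := congrFun (congrArg DFunLike.coe (barD2_S2_sub_T p G n)) z
      simp only [LinearMap.coe_comp, LinearMap.sub_apply, Function.comp_apply] at h1
      rw [map_add, h1, hz, map_zero, zero_sub, hu1, neg_add_cancel, map_zero]
    have hdzero : barD2 p (G ⧸ lowerP p G (n+1)) d = 0 := by
      obtain ⟨y, rfl⟩ := LinearMap.mem_range.mp hdD
      have := congrFun (congrArg DFunLike.coe (barD2_comp_barD3 p (G ⧸ lowerP p G (n+1)))) y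
      simpa using this
    have happly := congrArg (barD2 p (G ⧸ lowerP p G (n+1))) hde
    rw [map_add, map_sub, hdzero, hw2, hz, map_smul, sub_zero, zero_add] at happly
    have hbs : barD2 p (G ⧸ lowerP p G (n+1))
        (single ((1 : G ⧸ lowerP p G (n+1)), (1 : G ⧸ lowerP p G (n+1))) (1:ZMod p))
        = single (1 : G ⧸ lowerP p G (n+1)) (1:ZMod p) := by
      rw [barD2_single, one_smul, one_mul, sub_self, zero_add]
    rw [hbs] at happly
    have hk0 : k = 0 := by
      have h9 := congrArg (fun f : (G ⧸ lowerP p G (n+1)) →₀ ZMod p => f 1) happly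
      simpa using h9
    rw [hk0, zero_smul, add_zero] at hde
    rw [← hde]
    exact hdD

/-- exactness of the Stallings sequence at `H₂(G/G_{p,n+1})` -/
lemma H2_exact (hp : 1 ≤ p) (ξ : groupH2 p (G ⧸ lowerP p G (n+1)))
    (hxi : deltaH p G n ξ = 0) :
    ∃ η : groupH2 p G, groupH2Map p (pi p G n) η = ξ := by
  obtain ⟨val, z, hz, rfl⟩ := ξ
  have hdC : deltaC p G n z = 0 := by
    rw [← deltaH_mk p G n z ⟨z, hz, rfl⟩]
    exact hxi
  obtain ⟨w, hw, hmem⟩ := exact_aux p G n hp z (LinearMap.mem_ker.mp hz) hdC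
  refine ⟨⟨Submodule.mkQ _ w, w, LinearMap.mem_ker.mpr hw, rfl⟩, ?_⟩
  apply Subtype.ext
  show barQ2Map p (pi p G n) (Submodule.mkQ _ w) = Submodule.mkQ _ z
  rw [Submodule.mkQ_apply, Submodule.mkQ_apply, barQ2Map, Submodule.mapQ_apply]
  exact (Submodule.Quotient.eq _).mpr hmem
section Naturality
variable (p : ℕ) {A B : Type*} [Group A] [Group B] (φ : A →* B) (n : ℕ)

lemma quotMap_mk (k : ℕ) (g : A) :
    lowerPQuotMap p φ k (QuotientGroup.mk' _ g) = QuotientGroup.mk' _ (φ g) := by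
  rw [lowerPQuotMap, QuotientGroup.map_mk']
  rfl

/-- the induced map on `Msub` -/
noncomputable def muMap : ↥(Msub p A n) →* ↥(Msub p B n) :=
  ((lowerPQuotMap p φ (n+2)).comp (Msub p A n).subtype).codRestrict (Msub p B n) (by
    rintro ⟨x, ν, hν, rfl⟩
    show lowerPQuotMap p φ (n+2) (XX p A n ν) ∈ Msub p B n
    rw [quotMap_mk]
    exact Subgroup.mem_map_of_mem _ (lowerP_map_le p φ (n+1) (Subgroup.mem_map_of_mem φ hν)))

lemma muMap_coe (x : ↥(Msub p A n)) :
    (muMap p φ n x : B ⧸ lowerP p B (n+2)) = lowerPQuotMap p φ (n+2) (x : A ⧸ lowerP p A (n+2)) :=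
  rfl

/-- discrepancy between the two sections -/
noncomputable def dEl (q : A ⧸ lowerP p A (n+1)) : B :=
  (φ (Quotient.out q))⁻¹ * Quotient.out (lowerPQuotMap p φ (n+1) q)

lemma piB_phi (g : A) :
    pi p B n (φ g) = lowerPQuotMap p φ (n+1) (pi p A n g) := by
  rw [quotMap_mk]

lemma dEl_mem (q : A ⧸ lowerP p A (n+1)) : dEl p φ n q ∈ lowerP p B (n+1) := by
  have h : pi p B n (dEl p φ n q) = 1 := by
    rw [dEl, map_mul, map_inv, piB_phi, pi_out, pi_out, inv_mul_cancel]
  exact (QuotientGroup.eq_one_iff _).mp h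

noncomputable def dM (q : A ⧸ lowerP p A (n+1)) : ↥(Msub p B n) :=
  ⟨XX p B n (dEl p φ n q), Subgroup.mem_map_of_mem _ (dEl_mem p φ n q)⟩

lemma Fm_nat (q r : A ⧸ lowerP p A (n+1)) :
    Fm p B n (lowerPQuotMap p φ (n+1) q) (lowerPQuotMap p φ (n+1) r)
      = dM p φ n q * (dM p φ n r * (dM p φ n (q*r))⁻¹) * muMap p φ n (Fm p A n q r) := by
  apply Subtype.ext
  show XX p B n (fQ p B n (lowerPQuotMap p φ (n+1) q) (lowerPQuotMap p φ (n+1) r))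
    = XX p B n (dEl p φ n q) * (XX p B n (dEl p φ n r) * (XX p B n (dEl p φ n (q*r)))⁻¹)
      * (lowerPQuotMap p φ (n+2) (XX p A n (fQ p A n q r)))
  rw [quotMap_mk]
  have hGid : fQ p B n (lowerPQuotMap p φ (n+1) q) (lowerPQuotMap p φ (n+1) r)
      = (φ (Quotient.out q) * dEl p φ n q * (φ (Quotient.out q))⁻¹)
        * ((φ (Quotient.out q) * φ (Quotient.out r)) * (dEl p φ n r * (dEl p φ n (q*r))⁻¹)
            * (φ (Quotient.out q) * φ (Quotient.out r))⁻¹)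
        * (φ (Quotient.out q) * φ (Quotient.out r) * (φ (Quotient.out (q*r)))⁻¹) := by
    rw [fQ, ← map_mul (lowerPQuotMap p φ (n+1))]
    simp only [dEl]
    group
  rw [hGid, map_mul, map_mul,
    XX_conj p (dEl_mem p φ n q),
    XX_conj p (mul_mem (dEl_mem p φ n r) (inv_mem (dEl_mem p φ n (q*r))))]
  simp only [map_mul, map_inv, fQ]

lemma ofMul_muMap_smul [NeZero p] (b : ZMod p) (x : Additive ↥(Msub p A n)) :
    Additive.ofMul (muMap p φ n (Additive.toMul (b • x)))
      = b • Additive.ofMul (muMap p φ n (Additive.toMul x)) := by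
  rw [zmod_smul_val p, zmod_smul_val p, toMul_nsmul, map_pow, ofMul_pow]

/-- the `Dt` correction term -/
noncomputable def Dt : ((A ⧸ lowerP p A (n+1)) →₀ ZMod p) →ₗ[ZMod p]
    Additive ↥(Msub p B n) :=
  Finsupp.lift _ (ZMod p) _ fun q => Additive.ofMul (dM p φ n q)

lemma Dt_single (q : A ⧸ lowerP p A (n+1)) (b : ZMod p) :
    Dt p φ n (single q b) = b • Additive.ofMul (dM p φ n q) := by
  simp [Dt, Finsupp.lift_apply, Finsupp.sum_single_index]

lemma deltaC_nat_single [NeZero p]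
    (x : (A ⧸ lowerP p A (n+1)) × (A ⧸ lowerP p A (n+1))) (b : ZMod p) :
    deltaC p B n (Finsupp.lmapDomain (ZMod p) (ZMod p)
        (Prod.map (lowerPQuotMap p φ (n+1)) (lowerPQuotMap p φ (n+1))) (single x b))
      = Additive.ofMul (muMap p φ n (Additive.toMul (deltaC p A n (single x b))))
        + Dt p φ n (barD2 p (A ⧸ lowerP p A (n+1)) (single x b)) := by
  obtain ⟨q, r⟩ := x
  simp only [lmap_single, deltaC_single, barD2_single, Prod.map_apply, Prod.map_fst,
    Prod.map_snd, map_smul, map_add, map_sub, Dt_single, one_smul, ofMul_muMap_smul,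
    toMul_ofMul]
  rw [← smul_add, Fm_nat]
  refine congrArg (fun t => b • t) ?_
  simp only [ofMul_mul, ofMul_inv]
  abel

/-- chain-level naturality of `δ` up to a coboundary term -/
lemma deltaC_nat (hp : 1 ≤ p)
    (z : ((A ⧸ lowerP p A (n+1)) × (A ⧸ lowerP p A (n+1))) →₀ ZMod p) :
    deltaC p B n (Finsupp.lmapDomain (ZMod p) (ZMod p)
        (Prod.map (lowerPQuotMap p φ (n+1)) (lowerPQuotMap p φ (n+1))) z)
      = Additive.ofMul (muMap p φ n (Additive.toMul (deltaC p A n z)))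
        + Dt p φ n (barD2 p (A ⧸ lowerP p A (n+1)) z) := by
  haveI : NeZero p := ⟨Nat.one_le_iff_ne_zero.mp hp⟩
  induction z using Finsupp.induction with
  | zero => simp
  | single_add x b f hx hb ih =>
    simp only [map_add]
    rw [show Additive.toMul (deltaC p A n (single x b) + deltaC p A n f)
        = Additive.toMul (deltaC p A n (single x b)) * Additive.toMul (deltaC p A n f) from rfl,
      map_mul, ofMul_mul, ih, deltaC_nat_single p φ n x b]
    abel

lemma deltaC_nat_cycle (hp : 1 ≤ p)
    (z : ((A ⧸ lowerP p A (n+1)) × (A ⧸ lowerP p A (n+1))) →₀ ZMod p)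
    (hz : barD2 p (A ⧸ lowerP p A (n+1)) z = 0) :
    deltaC p B n (Finsupp.lmapDomain (ZMod p) (ZMod p)
        (Prod.map (lowerPQuotMap p φ (n+1)) (lowerPQuotMap p φ (n+1))) z)
      = Additive.ofMul (muMap p φ n (Additive.toMul (deltaC p A n z))) := by
  rw [deltaC_nat p φ n hp z, hz, map_zero, add_zero]

/-- naturality of `δ` at the `H₂` level -/
lemma deltaH_nat (hp : 1 ≤ p) (ξ : groupH2 p (A ⧸ lowerP p A (n+1))) :
    deltaH p B n (groupH2Map p (lowerPQuotMap p φ (n+1)) ξ)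
      = Additive.ofMul (muMap p φ n (Additive.toMul (deltaH p A n ξ))) := by
  obtain ⟨val, z, hz, rfl⟩ := ξ
  have hval : (groupH2Map p (lowerPQuotMap p φ (n+1)) ⟨Submodule.mkQ _ z, z, hz, rfl⟩).1
      = Submodule.mkQ _ (Finsupp.lmapDomain (ZMod p) (ZMod p)
          (Prod.map (lowerPQuotMap p φ (n+1)) (lowerPQuotMap p φ (n+1))) z) := by
    show barQ2Map p (lowerPQuotMap p φ (n+1)) (Submodule.mkQ _ z) = _
    rw [Submodule.mkQ_apply, Submodule.mkQ_apply, barQ2Map, Submodule.mapQ_apply]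
  have h1 : deltaH p B n (groupH2Map p (lowerPQuotMap p φ (n+1)) ⟨Submodule.mkQ _ z, z, hz, rfl⟩)
      = deltaC p B n (Finsupp.lmapDomain (ZMod p) (ZMod p)
          (Prod.map (lowerPQuotMap p φ (n+1)) (lowerPQuotMap p φ (n+1))) z) := by
    rw [deltaH, LinearMap.comp_apply, Submodule.subtype_apply, hval, Submodule.mkQ_apply,
      Submodule.liftQ_apply]
  rw [h1, deltaC_nat_cycle p φ n hp z (LinearMap.mem_ker.mp hz), deltaH_mk p A n z (Submodule.mem_map.mpr ⟨z, hz, rfl⟩)]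

end Naturality

section Functoriality
variable (p : ℕ)

lemma groupH2Map_val {G₁ G₂ : Type*} [Group G₁] [Group G₂] (φ₁ : G₁ →* G₂)
    (x : groupH2 p G₁) (w : (G₁ × G₁) →₀ ZMod p)
    (hxw : (x : ((G₁ × G₁) →₀ ZMod p) ⧸ LinearMap.range (barD3 p G₁))
      = Submodule.mkQ (LinearMap.range (barD3 p G₁)) w) :
    ((groupH2Map p φ₁ x) : ((G₂ × G₂) →₀ ZMod p) ⧸ LinearMap.range (barD3 p G₂))
      = Submodule.mkQ (LinearMap.range (barD3 p G₂))
          (Finsupp.lmapDomain (ZMod p) (ZMod p) (Prod.map φ₁ φ₁) w) := by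
  show barQ2Map p φ₁ (x : _) = _
  rw [hxw, Submodule.mkQ_apply, Submodule.mkQ_apply, barQ2Map, Submodule.mapQ_apply]

lemma groupH2Map_comp {G₁ G₂ G₃ : Type*} [Group G₁] [Group G₂] [Group G₃]
    (φ₁ : G₁ →* G₂) (φ₂ : G₂ →* G₃) (x : groupH2 p G₁) :
    groupH2Map p (φ₂.comp φ₁) x = groupH2Map p φ₂ (groupH2Map p φ₁ x) := by
  obtain ⟨val, w, hw, rfl⟩ := x
  apply Subtype.ext
  rw [groupH2Map_val p (φ₂.comp φ₁) _ w rfl,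
    groupH2Map_val p φ₂ _ (Finsupp.lmapDomain (ZMod p) (ZMod p) (Prod.map φ₁ φ₁) w)
      (groupH2Map_val p φ₁ _ w rfl)]
  congr 1
  rw [Finsupp.lmapDomain_apply, Finsupp.lmapDomain_apply, Finsupp.lmapDomain_apply,
    show (Prod.map (⇑(φ₂.comp φ₁)) (⇑(φ₂.comp φ₁))) = (Prod.map ⇑φ₂ ⇑φ₂) ∘ (Prod.map ⇑φ₁ ⇑φ₁)
      from rfl,
    Finsupp.mapDomain_comp]

lemma groupH2Map_id {G₁ : Type*} [Group G₁] (x : groupH2 p G₁) :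
    groupH2Map p (MonoidHom.id G₁) x = x := by
  obtain ⟨val, w, hw, rfl⟩ := x
  apply Subtype.ext
  rw [groupH2Map_val p (MonoidHom.id G₁) _ w rfl]
  show _ = Submodule.mkQ (LinearMap.range (barD3 p G₁)) w
  congr 1
  rw [Finsupp.lmapDomain_apply,
    show (Prod.map (⇑(MonoidHom.id G₁)) (⇑(MonoidHom.id G₁))) = id from rfl,
    Finsupp.mapDomain_id]

end Functoriality
section BaseCase
variable (p : ℕ) (G : Type*) [Group G]

instance : CommGroup (G ⧸ lowerP p G 2) :=
  { (inferInstance : Group (G ⧸ lowerP p G 2)) with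
    mul_comm := by
      intro x y
      induction x using QuotientGroup.induction_on with | H a => ?_
      induction y using QuotientGroup.induction_on with | H b => ?_
      show QuotientGroup.mk a * QuotientGroup.mk b = QuotientGroup.mk b * QuotientGroup.mk a
      rw [← QuotientGroup.mk_mul, ← QuotientGroup.mk_mul]
      apply QuotientGroup.eq.mpr
      have h : ⁅b⁻¹, a⁻¹⁆ ∈ lowerP p G 2 :=
        commutator_mem_lowerP p (k := 0) (by show b⁻¹ ∈ (⊤ : Subgroup G); trivial) a⁻¹
      rwa [show ⁅b⁻¹, a⁻¹⁆ = (a*b)⁻¹ * (b*a) from by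
        rw [commutatorElement_def]; group] at h }

lemma quot2_pow_eq_one (y : G ⧸ lowerP p G 2) : y ^ p = 1 := by
  induction y using QuotientGroup.induction_on with | H a => ?_
  show (QuotientGroup.mk a : G ⧸ lowerP p G 2) ^ p = 1
  rw [← QuotientGroup.mk_pow]
  exact (QuotientGroup.eq_one_iff _).mpr
    (pow_mem_lowerP p (k := 0) (by show a ∈ (⊤ : Subgroup G); trivial))

noncomputable instance : Module (ZMod p) (Additive (G ⧸ lowerP p G 2)) :=
  AddCommGroup.zmodModule (by
    intro x
    show p • x = 0
    rw [← ofMul_toMul x, ← ofMul_pow, quot2_pow_eq_one]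
    simp)

/-- evaluation of 1-chains in `G/G_{p,2}` -/
noncomputable def QE : (G →₀ ZMod p) →ₗ[ZMod p] Additive (G ⧸ lowerP p G 2) :=
  Finsupp.lift _ (ZMod p) _ fun g => Additive.ofMul (QuotientGroup.mk' (lowerP p G 2) g)

lemma QE_single (g : G) (b : ZMod p) :
    QE p G (single g b) = b • Additive.ofMul (QuotientGroup.mk' (lowerP p G 2) g) := by
  simp [QE, Finsupp.lift_apply, Finsupp.sum_single_index]

lemma QE_barD2 : (QE p G).comp (barD2 p G) = 0 := by
  apply Finsupp.lhom_ext
  rintro ⟨g, h⟩ b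
  simp only [LinearMap.coe_comp, Function.comp_apply, barD2_single, map_smul, map_sub, map_add,
    QE_single, one_smul, LinearMap.zero_apply, map_mul]
  rw [← smul_zero b]
  refine congrArg (fun t => b • t) ?_
  rw [ofMul_mul]
  abel

/-- the canonical map `H₁(G;ℤ/p) → G/G_{p,2}` -/
noncomputable def H1toQ : groupH1 p G →ₗ[ZMod p] Additive (G ⧸ lowerP p G 2) :=
  Submodule.liftQ _ (QE p G) (by
    rintro x ⟨y, rfl⟩
    have h := congrFun (congrArg DFunLike.coe (QE_barD2 p G)) y
    simpa using h)

lemma H1toQ_mk (c : G →₀ ZMod p) :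
    H1toQ p G (Submodule.mkQ _ c) = QE p G c := by
  simp [H1toQ]

lemma H1toQ_surjective : Function.Surjective (H1toQ p G) := by
  intro x
  obtain ⟨g, hg⟩ := QuotientGroup.mk'_surjective (lowerP p G 2) (Additive.toMul x)
  refine ⟨Submodule.mkQ _ (single g (1:ZMod p)), ?_⟩
  rw [H1toQ_mk, QE_single, one_smul, hg, ofMul_toMul]

/-- the inverse direction on group elements -/
noncomputable def QtoH1 : G ⧸ lowerP p G 2 →* Multiplicative (groupH1 p G) := by
  refine QuotientGroup.lift (lowerP p G 2)
    (MonoidHom.mk' (fun g => Multiplicative.ofAdd (Submodule.mkQ _ (single g (1:ZMod p)))) ?_) ?_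
  · intro a b
    show Multiplicative.ofAdd (Submodule.mkQ _ (single (a*b) (1:ZMod p)))
      = Multiplicative.ofAdd (Submodule.mkQ _ (single a (1:ZMod p))
          + Submodule.mkQ _ (single b (1:ZMod p)))
    refine congrArg Multiplicative.ofAdd ?_
    rw [← map_add]
    apply (Submodule.Quotient.eq _).mpr
    refine ⟨-(single (a, b) (1:ZMod p)), ?_⟩
    rw [map_neg, barD2_single, one_smul]
    abel
  · show lowerP p G 2 ≤ _
    refine (Subgroup.closure_le _).mpr ?_
    rintro x (⟨a, _, rfl⟩ | ⟨a, _, b, rfl⟩)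
    · refine MonoidHom.mem_ker.mpr ?_
      rw [map_pow]
      show (Multiplicative.ofAdd (Submodule.mkQ _ (single a (1:ZMod p)))) ^ p = 1
      rw [← ofAdd_nsmul, smul_p_cast_eq_zero p]
      rfl
    · refine MonoidHom.mem_ker.mpr ?_
      rw [map_commutatorElement]
      exact commutatorElement_eq_one_iff_commute.mpr (mul_comm _ _)

lemma QtoH1_mk (g : G) :
    QtoH1 p G (QuotientGroup.mk' (lowerP p G 2) g)
      = Multiplicative.ofAdd (Submodule.mkQ _ (single g (1:ZMod p))) := rfl

lemma QtoH1_H1toQ (hp : 1 ≤ p) (ξ : groupH1 p G) :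
    Multiplicative.toAdd (QtoH1 p G (Additive.toMul (H1toQ p G ξ))) = ξ := by
  haveI : NeZero p := ⟨Nat.one_le_iff_ne_zero.mp hp⟩
  obtain ⟨c, rfl⟩ := Submodule.mkQ_surjective _ ξ
  rw [H1toQ_mk]
  induction c using Finsupp.induction with
  | zero => simp
  | single_add g b f hg hb ih =>
    have e1 : QE p G (single g b + f) = QE p G (single g b) + QE p G f := map_add _ _ _
    have e2 : Submodule.mkQ (LinearMap.range (barD2 p G)) (single g b + f)
        = Submodule.mkQ _ (single g b) + Submodule.mkQ _ f := map_add _ _ _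
    rw [e1, e2, toMul_add, map_mul, toAdd_mul, ih]
    congr 1
    rw [QE_single, zmod_smul_val p, toMul_nsmul, toMul_ofMul, map_pow, QtoH1_mk, ← ofAdd_nsmul,
      toAdd_ofAdd, ← map_nsmul, Finsupp.smul_single, nsmul_eq_mul, mul_one, ZMod.natCast_val,
      ZMod.cast_id]

end BaseCase
section BaseCase2
variable (p : ℕ) (G : Type*) [Group G]

lemma H1toQ_injective (hp : 1 ≤ p) : Function.Injective (H1toQ p G) := by
  intro ξ ξ' h
  have h1 := QtoH1_H1toQ p G hp ξ
  have h2 := QtoH1_H1toQ p G hp ξ'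
  rw [← h1, ← h2, h]

end BaseCase2

section BaseNat
variable (p : ℕ) {A B : Type*} [Group A] [Group B] (φ : A →* B)

lemma H1toQ_nat (hp : 1 ≤ p) (ξ : groupH1 p A) :
    H1toQ p B (groupH1Map p φ ξ)
      = Additive.ofMul (lowerPQuotMap p φ 2 (Additive.toMul (H1toQ p A ξ))) := by
  haveI : NeZero p := ⟨Nat.one_le_iff_ne_zero.mp hp⟩
  obtain ⟨c, rfl⟩ := Submodule.mkQ_surjective _ ξ
  have hval : groupH1Map p φ (Submodule.mkQ _ c)
      = Submodule.mkQ _ (Finsupp.lmapDomain (ZMod p) (ZMod p) φ c) := by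
    rw [groupH1Map, Submodule.mkQ_apply, Submodule.mkQ_apply, Submodule.mapQ_apply]
  rw [hval, H1toQ_mk, H1toQ_mk]
  clear hval
  induction c using Finsupp.induction with
  | zero => simp
  | single_add g b f hg hb ih =>
    have e0 : Finsupp.lmapDomain (ZMod p) (ZMod p) φ (single g b + f)
        = single (φ g) b + Finsupp.lmapDomain (ZMod p) (ZMod p) φ f := by
      rw [map_add, lmap_single]
    have eA : QE p A (single g b + f) = QE p A (single g b) + QE p A f := map_add _ _ _
    have eB : QE p B (single (φ g) b + Finsupp.lmapDomain (ZMod p) (ZMod p) φ f)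
        = QE p B (single (φ g) b) + QE p B (Finsupp.lmapDomain (ZMod p) (ZMod p) φ f) :=
      map_add _ _ _
    rw [e0, eA, eB, toMul_add, map_mul, ofMul_mul, ih]
    congr 1
    rw [QE_single, QE_single, zmod_smul_val p, zmod_smul_val p, toMul_nsmul, toMul_ofMul,
      map_pow, quotMap_mk, ofMul_pow]

lemma quotMap2_bijective (hp : 1 ≤ p) (h1 : Function.Bijective (groupH1Map p φ)) :
    Function.Bijective (lowerPQuotMap p φ 2) := by
  constructor
  · intro x x' hxx
    obtain ⟨ξ, hξ⟩ := H1toQ_surjective p A (Additive.ofMul x)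
    obtain ⟨ξ', hξ'⟩ := H1toQ_surjective p A (Additive.ofMul x')
    have h := H1toQ_nat p φ hp ξ
    have h' := H1toQ_nat p φ hp ξ'
    rw [hξ, toMul_ofMul] at h
    rw [hξ', toMul_ofMul] at h'
    have heq : H1toQ p B (groupH1Map p φ ξ) = H1toQ p B (groupH1Map p φ ξ') := by
      rw [h, h', hxx]
    have hξeq : ξ = ξ' := h1.injective (H1toQ_injective p B hp heq)
    have : Additive.ofMul x = Additive.ofMul x' := by rw [← hξ, hξeq, hξ']
    simpa using congrArg Additive.toMul this
  · intro y
    obtain ⟨η, hη⟩ := H1toQ_surjective p B (Additive.ofMul y)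
    obtain ⟨ξ, rfl⟩ := h1.surjective η
    have h := H1toQ_nat p φ hp ξ
    rw [hη] at h
    refine ⟨Additive.toMul (H1toQ p A ξ), ?_⟩
    simpa using (congrArg Additive.toMul h).symm

end BaseNat
section Step
variable (p : ℕ) {A B : Type*} [Group A] [Group B] (φ : A →* B)

/-- the inductive step: an isomorphism at level `n+1` propagates to level `n+2`. -/
lemma step_bijective (hp : 1 ≤ p) (n : ℕ) (hn : 1 ≤ n)
    (hbij : Function.Bijective (lowerPQuotMap p φ (n+1)))
    (him : ∀ y : groupH2 p B, ∃ x : groupH2 p A,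
      groupH2Map p (pi p B n) (groupH2Map p φ x) = groupH2Map p (pi p B n) y) :
    Function.Bijective (lowerPQuotMap p φ (n+2)) := by
  -- the inverse of the level-`n+1` isomorphism
  let e : (A ⧸ lowerP p A (n+1)) ≃* (B ⧸ lowerP p B (n+1)) :=
    MulEquiv.ofBijective (lowerPQuotMap p φ (n+1)) hbij
  have hcompid₁ : (lowerPQuotMap p φ (n+1)).comp e.symm.toMonoidHom
      = MonoidHom.id (B ⧸ lowerP p B (n+1)) := by
    ext b
    exact e.apply_symm_apply b
  have hcompid₂ : (e.symm.toMonoidHom).comp (lowerPQuotMap p φ (n+1))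
      = MonoidHom.id (A ⧸ lowerP p A (n+1)) := by
    ext a
    exact e.symm_apply_apply a
  have hH2ψ : Function.Bijective (groupH2Map p (lowerPQuotMap p φ (n+1))) := by
    constructor
    · intro x y hxy
      have hx : groupH2Map p (e.symm.toMonoidHom)
            (groupH2Map p (lowerPQuotMap p φ (n+1)) x)
          = groupH2Map p (e.symm.toMonoidHom)
            (groupH2Map p (lowerPQuotMap p φ (n+1)) y) := by rw [hxy]
      rwa [← groupH2Map_comp, ← groupH2Map_comp, hcompid₂, groupH2Map_id, groupH2Map_id] at hx
    · intro ξ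
      refine ⟨groupH2Map p (e.symm.toMonoidHom) ξ, ?_⟩
      rw [← groupH2Map_comp, hcompid₁, groupH2Map_id]
  have hcomm : ∀ x : groupH2 p A,
      groupH2Map p (lowerPQuotMap p φ (n+1)) (groupH2Map p (pi p A n) x)
        = groupH2Map p (pi p B n) (groupH2Map p φ x) := by
    have hhom : (lowerPQuotMap p φ (n+1)).comp (pi p A n) = (pi p B n).comp φ := by
      ext g
      exact (piB_phi p φ n g).symm
    intro x
    rw [← groupH2Map_comp, ← groupH2Map_comp, hhom]
  -- bijectivity of the induced map on `Msub`
  have hμsurj : Function.Surjective (muMap p φ n) := by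
    intro xB
    obtain ⟨ξB, hξB⟩ := deltaH_surjective p B n hp hn xB
    obtain ⟨ξA, rfl⟩ := hH2ψ.2 ξB
    refine ⟨Additive.toMul (deltaH p A n ξA), ?_⟩
    have h := deltaH_nat p φ n hp ξA
    rw [hξB] at h
    simpa using (congrArg Additive.toMul h).symm
  have hμinj : Function.Injective (muMap p φ n) := by
    rw [injective_iff_map_eq_one]
    intro xA hxA1
    obtain ⟨ξ, hξ⟩ := deltaH_surjective p A n hp hn xA
    have h0 : deltaH p B n (groupH2Map p (lowerPQuotMap p φ (n+1)) ξ) = 0 := by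
      rw [deltaH_nat p φ n hp ξ, hξ, toMul_ofMul, hxA1]
      simp
    obtain ⟨y, hy⟩ := H2_exact p B n hp _ h0
    obtain ⟨x, hx⟩ := him y
    have h3 : groupH2Map p (lowerPQuotMap p φ (n+1)) (groupH2Map p (pi p A n) x)
        = groupH2Map p (lowerPQuotMap p φ (n+1)) ξ := by
      rw [hcomm, hx, hy]
    have h4 : groupH2Map p (pi p A n) x = ξ := hH2ψ.1 h3
    have h5 : deltaH p A n ξ = 0 := by rw [← h4]; exact deltaH_H2Map_pi p A n x
    rw [h5] at hξ
    have := congrArg Additive.toMul hξ.symm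
    simpa using this
  constructor
  · -- injectivity at level n+2
    rw [injective_iff_map_eq_one]
    intro x hx1
    obtain ⟨a, rfl⟩ := QuotientGroup.mk'_surjective (lowerP p A (n+2)) x
    rw [quotMap_mk] at hx1
    have hφa : φ a ∈ lowerP p B (n+2) := (QuotientGroup.eq_one_iff _).mp hx1
    have hpiB : pi p B n (φ a) = 1 :=
      (QuotientGroup.eq_one_iff _).mpr (lowerP_succ_le p (n+1) hφa)
    have hpiA : pi p A n a = 1 := by
      rw [piB_phi] at hpiB
      exact (injective_iff_map_eq_one _).mp hbij.1 _ hpiB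
    have haA : a ∈ lowerP p A (n+1) := (QuotientGroup.eq_one_iff _).mp hpiA
    have hmem : XX p A n a ∈ Msub p A n := Subgroup.mem_map_of_mem _ haA
    have hμ1 : muMap p φ n ⟨XX p A n a, hmem⟩ = 1 := by
      apply Subtype.ext
      show lowerPQuotMap p φ (n+2) (XX p A n a) = 1
      rw [quotMap_mk]
      exact (QuotientGroup.eq_one_iff _).mpr hφa
    have := hμinj (hμ1.trans (map_one (muMap p φ n)).symm)
    exact congrArg Subtype.val this
  · -- surjectivity at level n+2
    intro y
    obtain ⟨b, rfl⟩ := QuotientGroup.mk'_surjective (lowerP p B (n+2)) y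
    obtain ⟨xq, hxq⟩ := hbij.2 (pi p B n b)
    obtain ⟨a, rfl⟩ := QuotientGroup.mk'_surjective (lowerP p A (n+1)) xq
    rw [quotMap_mk] at hxq
    have hc : (φ a)⁻¹ * b ∈ lowerP p B (n+1) := by
      apply QuotientGroup.eq.mp
      exact hxq
    obtain ⟨xm, hxm⟩ := hμsurj ⟨XX p B n ((φ a)⁻¹ * b), Subgroup.mem_map_of_mem _ hc⟩
    obtain ⟨xval, a', ha', rfl⟩ := xm
    have hval : lowerPQuotMap p φ (n+2) (XX p A n a') = XX p B n ((φ a)⁻¹ * b) :=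
      congrArg Subtype.val hxm
    rw [quotMap_mk] at hval
    refine ⟨QuotientGroup.mk' _ (a * a'), ?_⟩
    rw [quotMap_mk]
    show XX p B n (φ (a * a')) = XX p B n b
    rw [map_mul, map_mul, hval, ← map_mul,
      show φ a * ((φ a)⁻¹ * b) = b from by group]

end Step

end StallingsAux
/-- Dwyer's theorem for the p-lower central series: if `φ : A → B`
induces an isomorphism on `H_1(−; ℤ/p)` and the composition
`H_2(A; ℤ/p) → H_2(B; ℤ/p) → H_2(B; ℤ/p)/Φ_{p,m}(B)` is surjective, where
`Φ_{p,m}(B) = ker(H_2(B; ℤ/p) → H_2(B/B_{p,m}; ℤ/p))`, then for every `n ≤ m+1`,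
`φ` induces an isomorphism `A/A_{p,n} → B/B_{p,n}`. -/
theorem lowerP_quot_iso_of_dwyer_hyp (p : ℕ) (hp : p.Prime)
    {A B : Type*} [Group A] [Group B] (φ : A →* B) (m : ℕ) (hm : 1 ≤ m)
    (h1 : Function.Bijective (groupH1Map p φ))
    (h2 : ∀ y : groupH2 p B, ∃ x : groupH2 p A,
      groupH2Map p φ x - y ∈
        LinearMap.ker (groupH2Map p (QuotientGroup.mk' (lowerP p B m)))) :
    ∀ n ≤ m + 1, Function.Bijective (lowerPQuotMap p φ n) := by
  have hp1 : 1 ≤ p := hp.pos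
  intro n
  induction n with
  | zero =>
    intro _
    haveI : Subsingleton (A ⧸ lowerP p A 0) :=
      QuotientGroup.subsingleton_quotient_top
    haveI : Subsingleton (B ⧸ lowerP p B 0) :=
      QuotientGroup.subsingleton_quotient_top
    exact ⟨fun a b _ => Subsingleton.elim a b, fun y => ⟨1, Subsingleton.elim _ _⟩⟩
  | succ k ih =>
    intro hk1
    rcases k with _ | k
    · haveI : Subsingleton (A ⧸ lowerP p A 1) :=
        QuotientGroup.subsingleton_quotient_top
      haveI : Subsingleton (B ⧸ lowerP p B 1) :=
        QuotientGroup.subsingleton_quotient_top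
      exact ⟨fun a b _ => Subsingleton.elim a b, fun y => ⟨1, Subsingleton.elim _ _⟩⟩
    · rcases k with _ | j
      · exact StallingsAux.quotMap2_bijective p φ hp1 h1
      · have hprev : Function.Bijective (lowerPQuotMap p φ (j+2)) := ih (by omega)
        have him : ∀ y : groupH2 p B, ∃ x : groupH2 p A,
            groupH2Map p (StallingsAux.pi p B (j+1)) (groupH2Map p φ x)
              = groupH2Map p (StallingsAux.pi p B (j+1)) y := by
          intro y
          obtain ⟨x, hx⟩ := h2 y
          refine ⟨x, ?_⟩
          have hle : lowerP p B m ≤ lowerP p B (j+2) := lowerP_le_of_le p (by omega)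
          have hcle : lowerP p B m ≤ Subgroup.comap (MonoidHom.id B) (lowerP p B (j+2)) := by
            rwa [Subgroup.comap_id]
          have hfact : (QuotientGroup.map (lowerP p B m) (lowerP p B (j+2)) (MonoidHom.id B)
              hcle).comp (QuotientGroup.mk' (lowerP p B m))
              = QuotientGroup.mk' (lowerP p B (j+2)) := by
            ext b
            rw [MonoidHom.comp_apply, QuotientGroup.map_mk']
            rfl
          have hdiff : groupH2Map p (QuotientGroup.mk' (lowerP p B (j+2)))
              (groupH2Map p φ x - y) = 0 := by
            calc groupH2Map p (QuotientGroup.mk' (lowerP p B (j+2))) (groupH2Map p φ x - y)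
                = groupH2Map p (QuotientGroup.map (lowerP p B m) (lowerP p B (j+2))
                    (MonoidHom.id B) hcle)
                    (groupH2Map p (QuotientGroup.mk' (lowerP p B m))
                      (groupH2Map p φ x - y)) := by
                  rw [← StallingsAux.groupH2Map_comp, hfact]
              _ = 0 := by rw [LinearMap.mem_ker.mp hx, map_zero]
          exact sub_eq_zero.mp (by rw [← map_sub]; exact hdiff)
        exact StallingsAux.step_bijective p φ hp1 (j+1) (by omega) hprev him
end
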